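/- arXiv:2003.00652 — 3 statements merged into one kernel-verified Lean document; each statement's English description precedes it below -/
import Mathlib

section
/- For any two probability measures P and Q on a standard Borel space, the Jensen–Shannon divergence (with natural logarithm) and the squared Hellinger distance satisfy (ln 2)·H²(P,Q) ≤ JS(P,Q) ≤ H²(P,Q). -/
open MeasureTheory ProbabilityTheory Filter
open scoped ENNReal NNReal

noncomputable section

universe u

/-- The squared Hellinger distance `H²(P,Q) = (1/2) ∫ (√(dP/dμ) - √(dQ/dμ))² dμ`, computed
with the dominating measure `μ = P + Q` (the value does not depend on the choice of a
dominating measure). -/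
def sqHellinger {Ω : Type*} [MeasurableSpace Ω] (P Q : Measure Ω) : ℝ :=
  (1/2) * ∫ x, (Real.sqrt ((P.rnDeriv (P + Q) x).toReal)
    - Real.sqrt ((Q.rnDeriv (P + Q) x).toReal)) ^ 2 ∂(P + Q)

open scoped Classical in
/-- The Kullback-Leibler divergence `KL(P,Q) = ∫ log (dP/dQ) dP` when `P ≪ Q` (and the
integral exists), and `+∞` otherwise. -/
def klDiv {Ω : Type*} [MeasurableSpace Ω] (P Q : Measure Ω) : ℝ≥0∞ :=
  if P ≪ Q ∧ Integrable (fun x => Real.log ((P.rnDeriv Q x).toReal)) P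
  then ENNReal.ofReal (∫ x, Real.log ((P.rnDeriv Q x).toReal) ∂P)
  else ⊤

/-- The Jensen-Shannon divergence (with natural logarithm)
`JS(P,Q) = (1/2) KL(P, (P+Q)/2) + (1/2) KL(Q, (P+Q)/2)`. -/
def jsDiv {Ω : Type*} [MeasurableSpace Ω] (P Q : Measure Ω) : ℝ≥0∞ :=
  (2:ℝ≥0∞)⁻¹ * klDiv P ((2:ℝ≥0∞)⁻¹ • (P + Q))
    + (2:ℝ≥0∞)⁻¹ * klDiv Q ((2:ℝ≥0∞)⁻¹ • (P + Q))


open Real Set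


lemma L0 {s : ℝ} (hs : 1 ≤ s) : 2 * Real.log s ≤ s - 1/s := by
  have h0 : (0:ℝ) < s := by linarith
  have h := Real.self_le_sinh_iff.mpr (Real.log_nonneg hs)
  rw [Real.sinh_log h0] at h
  rw [inv_eq_one_div] at h
  linarith

-- log y - log (1-y) ≤ (2y-1)/(√y √(1-y)) for 1/2 ≤ y < 1
lemma lemA {y : ℝ} (hy : 1/2 ≤ y) (hy1 : y < 1) :
    Real.log y - Real.log (1-y) ≤ (2*y-1)/(Real.sqrt y * Real.sqrt (1-y)) := by
  set a := Real.sqrt y with ha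
  set b := Real.sqrt (1-y) with hb
  have hy0 : (0:ℝ) < y := by linarith
  have h1y : (0:ℝ) < 1 - y := by linarith
  have ha0 : 0 < a := Real.sqrt_pos.mpr hy0
  have hb0 : 0 < b := Real.sqrt_pos.mpr h1y
  have ha2 : a^2 = y := Real.sq_sqrt hy0.le
  have hb2 : b^2 = 1-y := Real.sq_sqrt h1y.le
  have hba : b ≤ a := by
    rw [ha, hb]; exact Real.sqrt_le_sqrt (by linarith)
  have hs : 1 ≤ a/b := (one_le_div hb0).mpr hba
  have h := L0 hs
  have hlog : Real.log (a/b) = (Real.log y - Real.log (1-y))/2 := by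
    rw [Real.log_div ha0.ne' hb0.ne', ha, hb, Real.log_sqrt hy0.le, Real.log_sqrt h1y.le]
    ring
  rw [hlog] at h
  have hval : a/b - 1/(a/b) = (2*y-1)/(a*b) := by
    calc a/b - 1/(a/b) = (a^2-b^2)/(a*b) := by field_simp
      _ = (2*y-1)/(a*b) := by rw [ha2, hb2]; ring_nf
  rw [hval] at h
  linarith

lemma key2 {x : ℝ} (hx : 1/2 < x) (hx1 : x < 1) :
    (1-x) * Real.log (1-x) ≤ x * Real.log x := by
  have hx0 : (0:ℝ) < x := by linarith
  have h1x : (0:ℝ) < 1 - x := by linarith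
  have h1 : -Real.log x ≤ (1-x)/x := by
    have := Real.log_le_sub_one_of_pos (inv_pos.mpr hx0)
    rw [Real.log_inv] at this
    rw [inv_eq_one_div] at this
    have : -Real.log x ≤ 1/x - 1 := this
    calc -Real.log x ≤ 1/x - 1 := this
      _ = (1-x)/x := by field_simp
  have h2 : Real.log (1-x) - Real.log x ≤ (1-2*x)/x := by
    have := Real.log_le_sub_one_of_pos (div_pos h1x hx0)
    rw [Real.log_div h1x.ne' hx0.ne'] at this
    calc Real.log (1-x) - Real.log x ≤ (1-x)/x - 1 := this
      _ = (1-2*x)/x := by field_simp; ring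
  -- multiply h1 by (2x-1) ≥ 0 and h2 by (1-x) ≥ 0
  have m1 : (2*x-1) * (-Real.log x) ≤ (2*x-1) * ((1-x)/x) :=
    mul_le_mul_of_nonneg_left h1 (by linarith)
  have m2 : (1-x) * (Real.log (1-x) - Real.log x) ≤ (1-x) * ((1-2*x)/x) :=
    mul_le_mul_of_nonneg_left h2 (by linarith)
  have e : (2*x-1) * ((1-x)/x) + (1-x) * ((1-2*x)/x) = 0 := by field_simp; ring
  nlinarith [m1, m2]


section derivs
-- auxiliary HasDerivAt facts for y ∈ (0,1)
variable {y : ℝ}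

lemma hasDerivAt_sqrt_one_sub (h1y : (0:ℝ) < 1 - y) :
    HasDerivAt (fun z : ℝ => Real.sqrt (1-z)) (-(1/(2*Real.sqrt (1-y)))) y := by
  have h := (Real.hasDerivAt_sqrt (x := 1-y) h1y.ne').comp y
    (((hasDerivAt_id y).const_sub 1) : HasDerivAt (fun z : ℝ => 1 - z) (-1) y)
  exact h.congr_deriv (by ring)

lemma hasDerivAt_prod (hy0 : (0:ℝ) < y) (h1y : (0:ℝ) < 1 - y) :
    HasDerivAt (fun z : ℝ => Real.sqrt z * Real.sqrt (1-z))
      ((1/(2*Real.sqrt y)) * Real.sqrt (1-y) + Real.sqrt y * (-(1/(2*Real.sqrt (1-y))))) y :=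
  (Real.hasDerivAt_sqrt hy0.ne').mul (hasDerivAt_sqrt_one_sub h1y)

lemma hasDerivAt_one_sub_mul_log (h1y : (0:ℝ) < 1 - y) :
    HasDerivAt (fun z : ℝ => (1-z) * Real.log (1-z)) (-(Real.log (1-y) + 1)) y := by
  have h := (Real.hasDerivAt_mul_log (x := 1-y) h1y.ne').comp y
    (((hasDerivAt_id y).const_sub 1) : HasDerivAt (fun z : ℝ => 1 - z) (-1) y)
  exact h.congr_deriv (by ring)

lemma prod_deriv_eq (hy0 : (0:ℝ) < y) (h1y : (0:ℝ) < 1 - y) :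
    (1/(2*Real.sqrt y)) * Real.sqrt (1-y) + Real.sqrt y * (-(1/(2*Real.sqrt (1-y))))
      = (1-2*y)/(2*(Real.sqrt y * Real.sqrt (1-y))) := by
  have ha0 : 0 < Real.sqrt y := Real.sqrt_pos.mpr hy0
  have hb0 : 0 < Real.sqrt (1-y) := Real.sqrt_pos.mpr h1y
  have ha2 : Real.sqrt y ^ 2 = y := Real.sq_sqrt hy0.le
  have hb2 : Real.sqrt (1-y) ^ 2 = 1 - y := Real.sq_sqrt h1y.le
  have step : (1/(2*Real.sqrt y)) * Real.sqrt (1-y) + Real.sqrt y * (-(1/(2*Real.sqrt (1-y))))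
      = (Real.sqrt (1-y)^2 - Real.sqrt y^2)/(2*(Real.sqrt y * Real.sqrt (1-y))) := by
    field_simp
    ring
  rw [step, ha2, hb2]
  ring_nf

end derivs

/-- The function for the upper bound. -/
noncomputable def Ufun : ℝ → ℝ := fun y =>
  1 - 2*(Real.sqrt y * Real.sqrt (1-y)) - (Real.log 2 + y*Real.log y + (1-y)*Real.log (1-y))

lemma hasDerivAt_Ufun {y : ℝ} (hy0 : (0:ℝ) < y) (h1y : (0:ℝ) < 1 - y) :
    HasDerivAt Ufun
      ((1-2*y)/(Real.sqrt y * Real.sqrt (1-y)) * (-1) - Real.log y + Real.log (1-y)) y := by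
  have h1 : HasDerivAt (fun z : ℝ => 1 - 2*(Real.sqrt z * Real.sqrt (1-z)))
      (-(2 * ((1-2*y)/(2*(Real.sqrt y * Real.sqrt (1-y)))))) y := by
    have := ((hasDerivAt_prod hy0 h1y).const_mul 2).const_sub 1
    rwa [prod_deriv_eq hy0 h1y] at this
  have h2 : HasDerivAt (fun z : ℝ => Real.log 2 + z*Real.log z + (1-z)*Real.log (1-z))
      ((Real.log y + 1) + (-(Real.log (1-y) + 1))) y :=
    (((Real.hasDerivAt_mul_log hy0.ne').const_add (Real.log 2))).add
      (hasDerivAt_one_sub_mul_log h1y)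
  have h := h1.sub h2
  refine h.congr_deriv ?_
  have hab : Real.sqrt y * Real.sqrt (1-y) ≠ 0 :=
    (mul_pos (Real.sqrt_pos.mpr hy0) (Real.sqrt_pos.mpr h1y)).ne'
  field_simp
  ring

lemma Ufun_mono : MonotoneOn Ufun (Ico (1/2 : ℝ) 1) := by
  have hconv : Convex ℝ (Ico (1/2 : ℝ) 1) := convex_Ico _ _
  have hderiv : ∀ y ∈ Ioo (0:ℝ) 1, HasDerivAt Ufun
      ((1-2*y)/(Real.sqrt y * Real.sqrt (1-y)) * (-1) - Real.log y + Real.log (1-y)) y :=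
    fun y hy => hasDerivAt_Ufun hy.1 (by linarith [hy.2])
  have hdiff : DifferentiableOn ℝ Ufun (Ico (1/2 : ℝ) 1) := by
    intro y hy
    exact (hderiv y ⟨by linarith [hy.1], hy.2⟩).differentiableAt.differentiableWithinAt
  refine monotoneOn_of_deriv_nonneg hconv hdiff.continuousOn
    (hdiff.mono ?_) ?_
  · rw [interior_Ico]; exact Ioo_subset_Ico_self
  · rw [interior_Ico]
    intro y hy
    have hy0 : (0:ℝ) < y := by linarith [hy.1]
    have h1y : (0:ℝ) < 1 - y := by linarith [hy.2]
    rw [(hderiv y ⟨hy0, hy.2⟩).deriv]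
    have hA := lemA (y := y) hy.1.le hy.2
    have hab : 0 < Real.sqrt y * Real.sqrt (1-y) :=
      mul_pos (Real.sqrt_pos.mpr hy0) (Real.sqrt_pos.mpr h1y)
    have : (1-2*y)/(Real.sqrt y * Real.sqrt (1-y)) * (-1)
        = (2*y-1)/(Real.sqrt y * Real.sqrt (1-y)) := by ring
    rw [this]
    linarith


/-- The ratio function for the lower bound. -/
noncomputable def Rfun : ℝ → ℝ := fun y =>
  (-(y*Real.log y + (1-y)*Real.log (1-y))) / (Real.sqrt y * Real.sqrt (1-y))

lemma hasDerivAt_Rfun {y : ℝ} (hy0 : (0:ℝ) < y) (h1y : (0:ℝ) < 1 - y) :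
    HasDerivAt Rfun
      (((-(Real.log y + 1) - (-(Real.log (1-y) + 1))) * (Real.sqrt y * Real.sqrt (1-y))
        - (-(y*Real.log y + (1-y)*Real.log (1-y))) * ((1-2*y)/(2*(Real.sqrt y * Real.sqrt (1-y)))))
        / (Real.sqrt y * Real.sqrt (1-y))^2) y := by
  have hab : Real.sqrt y * Real.sqrt (1-y) ≠ 0 :=
    (mul_pos (Real.sqrt_pos.mpr hy0) (Real.sqrt_pos.mpr h1y)).ne'
  have hN : HasDerivAt (fun z : ℝ => -(z*Real.log z + (1-z)*Real.log (1-z)))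
      (-(Real.log y + 1) - (-(Real.log (1-y) + 1))) y := by
    have := ((Real.hasDerivAt_mul_log hy0.ne').add (hasDerivAt_one_sub_mul_log h1y)).neg
    exact this.congr_deriv (by ring)
  have hD : HasDerivAt (fun z : ℝ => Real.sqrt z * Real.sqrt (1-z))
      ((1-2*y)/(2*(Real.sqrt y * Real.sqrt (1-y)))) y := by
    have := hasDerivAt_prod hy0 h1y
    rwa [prod_deriv_eq hy0 h1y] at this
  exact hN.div hD hab

lemma Rfun_anti : AntitoneOn Rfun (Ico (1/2 : ℝ) 1) := by
  have hconv : Convex ℝ (Ico (1/2 : ℝ) 1) := convex_Ico _ _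
  have hdiff : DifferentiableOn ℝ Rfun (Ico (1/2 : ℝ) 1) := by
    intro y hy
    exact (hasDerivAt_Rfun (by linarith [hy.1]) (by linarith [hy.2])).differentiableAt.differentiableWithinAt
  refine antitoneOn_of_deriv_nonpos hconv hdiff.continuousOn (hdiff.mono ?_) ?_
  · rw [interior_Ico]; exact Ioo_subset_Ico_self
  · rw [interior_Ico]
    intro y hy
    have hy0 : (0:ℝ) < y := by linarith [hy.1]
    have h1y : (0:ℝ) < 1 - y := by linarith [hy.2]
    rw [(hasDerivAt_Rfun hy0 h1y).deriv]
    set a := Real.sqrt y with hadef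
    set b := Real.sqrt (1-y) with hbdef
    have ha0 : 0 < a := Real.sqrt_pos.mpr hy0
    have hb0 : 0 < b := Real.sqrt_pos.mpr h1y
    have ha2 : a^2 = y := Real.sq_sqrt hy0.le
    have hb2 : b^2 = 1-y := Real.sq_sqrt h1y.le
    have habsq : (a*b)*(a*b) = y*(1-y) := by
      calc (a*b)*(a*b) = a^2 * b^2 := by ring
        _ = y*(1-y) := by rw [ha2, hb2]
    have h2ab : (0:ℝ) < 2*(a*b) := by positivity
    apply div_nonpos_of_nonpos_of_nonneg _ (sq_nonneg _)
    rw [sub_nonpos, ← mul_div_assoc, le_div_iff₀ h2ab]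
    have e : (-(Real.log y + 1) - (-(Real.log (1-y) + 1))) * (a*b) * (2*(a*b))
        = 2*((a*b)*(a*b))*(Real.log (1-y) - Real.log y) := by ring
    rw [e, habsq]
    have hkey := key2 hy.1 hy.2
    have id1 : (-(y*Real.log y + (1-y)*Real.log (1-y))) * (1-2*y)
        - 2*(y*(1-y))*(Real.log (1-y) - Real.log y)
        = y*Real.log y - (1-y)*Real.log (1-y) := by ring
    linarith [hkey, id1]


lemma pointwise_ge {a b : ℝ} (hb : 0 ≤ b) (hba : b ≤ a) (hab : a + b = 1) :
    Real.log 2 * (Real.sqrt a - Real.sqrt b)^2 ≤ a * Real.log (2*a) + b * Real.log (2*b) ∧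
    a * Real.log (2*a) + b * Real.log (2*b) ≤ (Real.sqrt a - Real.sqrt b)^2 := by
  have hb1 : b = 1 - a := by linarith
  subst hb1
  have ha2 : 1/2 ≤ a := by linarith
  rcases eq_or_lt_of_le (by linarith : a ≤ 1) with h1 | h1
  · subst h1
    norm_num
    linarith [Real.log_le_sub_one_of_pos (by norm_num : (0:ℝ) < 2)]
  · have ha0 : (0:ℝ) < a := by linarith
    have h1a : (0:ℝ) < 1 - a := by linarith
    have hsum : a * Real.log (2*a) + (1-a) * Real.log (2*(1-a))
        = Real.log 2 + a * Real.log a + (1-a) * Real.log (1-a) := by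
      rw [Real.log_mul two_ne_zero ha0.ne', Real.log_mul two_ne_zero h1a.ne']
      ring
    have hsq : (Real.sqrt a - Real.sqrt (1-a))^2 = 1 - 2*(Real.sqrt a * Real.sqrt (1-a)) := by
      have e1 := Real.sq_sqrt ha0.le
      have e2 := Real.sq_sqrt h1a.le
      calc (Real.sqrt a - Real.sqrt (1-a))^2
          = Real.sqrt a^2 + Real.sqrt (1-a)^2 - 2*(Real.sqrt a * Real.sqrt (1-a)) := by ring
        _ = 1 - 2*(Real.sqrt a * Real.sqrt (1-a)) := by rw [e1, e2]; ring
    rw [hsum, hsq]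
    have hmemA : a ∈ Ico (1/2 : ℝ) 1 := ⟨ha2, h1⟩
    have hmemH : (1/2 : ℝ) ∈ Ico (1/2 : ℝ) 1 := by constructor <;> norm_num
    have hlog_half : Real.log (1/2 : ℝ) = - Real.log 2 := by
      rw [one_div, Real.log_inv]
    constructor
    · -- lower bound, via Rfun
      have hR := Rfun_anti hmemH hmemA ha2
      have hRhalf : Rfun (1/2 : ℝ) = 2 * Real.log 2 := by
        rw [Rfun]
        norm_num
        rw [hlog_half]
        rw [show ((Real.sqrt 2)⁻¹ * (Real.sqrt 2)⁻¹ : ℝ) = 2⁻¹ from by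
          rw [← mul_inv, Real.mul_self_sqrt (by norm_num)]]
        ring
      rw [hRhalf, Rfun] at hR
      have hD : 0 < Real.sqrt a * Real.sqrt (1-a) :=
        mul_pos (Real.sqrt_pos.mpr ha0) (Real.sqrt_pos.mpr h1a)
      rw [div_le_iff₀ hD] at hR
      nlinarith [hR]
    · -- upper bound, via Ufun
      have hU := Ufun_mono hmemH hmemA ha2
      have hUhalf : Ufun (1/2 : ℝ) = 0 := by
        rw [Ufun]
        norm_num
        rw [hlog_half]
        rw [show ((Real.sqrt 2)⁻¹ * (Real.sqrt 2)⁻¹ : ℝ) = 2⁻¹ from by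
          rw [← mul_inv, Real.mul_self_sqrt (by norm_num)]]
        ring
      rw [hUhalf, Ufun] at hU
      linarith

lemma pointwise {a b : ℝ} (ha : 0 ≤ a) (hb : 0 ≤ b) (hab : a + b = 1) :
    Real.log 2 * (Real.sqrt a - Real.sqrt b)^2 ≤ a * Real.log (2*a) + b * Real.log (2*b) ∧
    a * Real.log (2*a) + b * Real.log (2*b) ≤ (Real.sqrt a - Real.sqrt b)^2 := by
  rcases le_total b a with h | h
  · exact pointwise_ge hb h hab
  · have := pointwise_ge ha h (by linarith)
    have hsq : (Real.sqrt a - Real.sqrt b)^2 = (Real.sqrt b - Real.sqrt a)^2 := by ring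
    rw [hsq]
    exact ⟨by linarith [this.1], by linarith [this.2]⟩


lemma aux_lower {y : ℝ} (h0 : 0 ≤ y) : y - 1/2 ≤ y * Real.log (2*y) := by
  rcases eq_or_lt_of_le h0 with h | h
  · simp [← h]
  · have ht := Real.log_le_sub_one_of_pos (show (0:ℝ) < (2*y)⁻¹ by positivity)
    rw [Real.log_inv] at ht
    -- ht : -log (2y) ≤ (2y)⁻¹ - 1
    have hm := mul_le_mul_of_nonneg_left ht h0
    have he : y * ((2*y)⁻¹ - 1) = 1/2 - y := by field_simp
    rw [he] at hm
    linarith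

lemma aux_bound {y : ℝ} (h0 : 0 ≤ y) (h1 : y ≤ 1) : |y * Real.log (2*y)| ≤ 1 := by
  rcases eq_or_lt_of_le h0 with h | h
  · simp [← h]
  · rw [abs_le]
    constructor
    · linarith [aux_lower h0]
    · have hl1 : Real.log (2*y) ≤ 1 :=
        le_trans (Real.log_le_sub_one_of_pos (by positivity)) (by linarith)
      rcases le_or_gt (Real.log (2*y)) 0 with hneg | hpos
      · have := mul_nonpos_of_nonneg_of_nonpos h0 hneg
        linarith
      · nlinarith

lemma klDiv_half_smul {Ω : Type*} [MeasurableSpace Ω] (R ν : Measure Ω)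
    [IsFiniteMeasure R] [IsFiniteMeasure ν] (hR : R ≪ ν)
    (hbound : ∀ᵐ x ∂ν, (R.rnDeriv ν x).toReal ≤ 1) :
    klDiv R ((2:ℝ≥0∞)⁻¹ • ν)
      = ENNReal.ofReal (∫ x, (R.rnDeriv ν x).toReal
          * Real.log (2 * (R.rnDeriv ν x).toReal) ∂ν) := by
  have h20 : ((2:ℝ≥0∞)⁻¹) ≠ 0 := by simp
  have h2t : ((2:ℝ≥0∞)⁻¹) ≠ ⊤ := by simp
  have hRM : R ≪ (2:ℝ≥0∞)⁻¹ • ν := hR.trans (Measure.absolutelyContinuous_smul h20)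
  have hrn : R.rnDeriv ((2:ℝ≥0∞)⁻¹ • ν) =ᵐ[ν] fun x => (2:ℝ≥0∞) * R.rnDeriv ν x := by
    have h := Measure.rnDeriv_smul_right_of_ne_top R ν h20 h2t
    filter_upwards [h] with x hx
    rw [hx]
    simp
  have haeR : (fun x => Real.log ((R.rnDeriv ((2:ℝ≥0∞)⁻¹ • ν) x).toReal))
      =ᵐ[R] fun x => Real.log (2 * (R.rnDeriv ν x).toReal) := by
    filter_upwards [hR.ae_eq hrn] with x hx
    rw [hx, ENNReal.toReal_mul, ENNReal.toReal_ofNat]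
  have hmeas : Measurable fun x => (R.rnDeriv ν x).toReal :=
    (Measure.measurable_rnDeriv R ν).ennreal_toReal
  have hmeas2 : Measurable fun x => (R.rnDeriv ν x).toReal
      * Real.log (2 * (R.rnDeriv ν x).toReal) :=
    hmeas.mul (Real.measurable_log.comp (measurable_const.mul hmeas))
  have hint_mu : Integrable (fun x => (R.rnDeriv ν x).toReal
      * Real.log (2 * (R.rnDeriv ν x).toReal)) ν := by
    refine Integrable.mono' (integrable_const 1) hmeas2.aestronglyMeasurable ?_
    filter_upwards [hbound] with x hx
    rw [Real.norm_eq_abs]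
    exact aux_bound ENNReal.toReal_nonneg hx
  have hintR : Integrable (fun x => Real.log (2 * (R.rnDeriv ν x).toReal)) R := by
    refine (MeasureTheory.integrable_rnDeriv_smul_iff hR).mp ?_
    simpa [smul_eq_mul] using hint_mu
  rw [klDiv, if_pos ⟨hRM, hintR.congr haeR.symm⟩]
  congr 1
  calc ∫ x, Real.log ((R.rnDeriv ((2:ℝ≥0∞)⁻¹ • ν) x).toReal) ∂(R)
      = ∫ x, Real.log (2 * (R.rnDeriv ν x).toReal) ∂(R) := integral_congr_ae haeR
    _ = ∫ x, (R.rnDeriv ν x).toReal • Real.log (2 * (R.rnDeriv ν x).toReal) ∂ν :=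
        (MeasureTheory.integral_rnDeriv_smul hR).symm
    _ = _ := by simp [smul_eq_mul]


/-- Comparison of the Jensen-Shannon divergence (with natural logarithm) and the squared
Hellinger distance: `(ln 2) · H²(P,Q) ≤ JS(P,Q) ≤ H²(P,Q)`. -/
theorem js_le_sqHellinger_and_log_two_mul_sqHellinger_le_js
    (Ω : Type u) [MeasurableSpace Ω] [StandardBorelSpace Ω]
    (P Q : Measure Ω) [IsProbabilityMeasure P] [IsProbabilityMeasure Q] :
    ENNReal.ofReal (Real.log 2 * sqHellinger P Q) ≤ jsDiv P Q ∧
      jsDiv P Q ≤ ENNReal.ofReal (sqHellinger P Q) := by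
  set μ : Measure Ω := P + Q with hμdef
  have hP : P ≪ μ := (Measure.le_add_right le_rfl).absolutelyContinuous
  have hQ : Q ≪ μ := (Measure.le_add_left le_rfl).absolutelyContinuous
  set f : Ω → ℝ := fun x => (P.rnDeriv μ x).toReal with hfdef
  set g : Ω → ℝ := fun x => (Q.rnDeriv μ x).toReal with hgdef
  have hsum : ∀ᵐ x ∂μ, f x + g x = 1 := by
    have h1 := Measure.rnDeriv_add' P Q μ
    rw [← hμdef] at h1
    have h2 := Measure.rnDeriv_self μ
    filter_upwards [h1, h2, Measure.rnDeriv_lt_top P μ, Measure.rnDeriv_lt_top Q μ]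
      with x hx1 hx2 hxP hxQ
    have hsum' : P.rnDeriv μ x + Q.rnDeriv μ x = 1 := by
      rw [← hx2, hx1]; simp
    show (P.rnDeriv μ x).toReal + (Q.rnDeriv μ x).toReal = 1
    rw [← ENNReal.toReal_add hxP.ne hxQ.ne, hsum']
    simp
  have hf1 : ∀ᵐ x ∂μ, f x ≤ 1 := by
    filter_upwards [hsum] with x hx
    have hg0 : 0 ≤ g x := ENNReal.toReal_nonneg
    linarith
  have hg1 : ∀ᵐ x ∂μ, g x ≤ 1 := by
    filter_upwards [hsum] with x hx
    have hf0 : 0 ≤ f x := ENNReal.toReal_nonneg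
    linarith
  have hklP := klDiv_half_smul P μ hP hf1
  have hklQ := klDiv_half_smul Q μ hQ hg1
  set A := ∫ x, f x * Real.log (2 * f x) ∂μ with hAdef
  set B := ∫ x, g x * Real.log (2 * g x) ∂μ with hBdef
  have hmf : Measurable f := (Measure.measurable_rnDeriv P μ).ennreal_toReal
  have hmg : Measurable g := (Measure.measurable_rnDeriv Q μ).ennreal_toReal
  have hintA : Integrable (fun x => f x * Real.log (2 * f x)) μ := by
    refine Integrable.mono' (integrable_const 1)
      (hmf.mul (Real.measurable_log.comp (measurable_const.mul hmf))).aestronglyMeasurable ?_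
    filter_upwards [hf1] with x hx
    rw [Real.norm_eq_abs]
    exact aux_bound ENNReal.toReal_nonneg hx
  have hintB : Integrable (fun x => g x * Real.log (2 * g x)) μ := by
    refine Integrable.mono' (integrable_const 1)
      (hmg.mul (Real.measurable_log.comp (measurable_const.mul hmg))).aestronglyMeasurable ?_
    filter_upwards [hg1] with x hx
    rw [Real.norm_eq_abs]
    exact aux_bound ENNReal.toReal_nonneg hx
  have hμuniv : (μ Set.univ).toReal = 2 := by
    rw [hμdef]
    simp only [Measure.coe_add, Pi.add_apply, measure_univ]
    norm_num
  have hintf : Integrable f μ := Measure.integrable_toReal_rnDeriv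
  have hintg : Integrable g μ := Measure.integrable_toReal_rnDeriv
  have hfval : ∫ x, f x ∂μ = 1 := by
    rw [hfdef, Measure.integral_toReal_rnDeriv hP]
    simp
  have hgval : ∫ x, g x ∂μ = 1 := by
    rw [hgdef, Measure.integral_toReal_rnDeriv hQ]
    simp
  have hA0 : 0 ≤ A := by
    have hle : ∀ᵐ x ∂μ, f x - 1/2 ≤ f x * Real.log (2 * f x) :=
      ae_of_all _ fun x => aux_lower ENNReal.toReal_nonneg
    have h := integral_mono_ae (hintf.sub (integrable_const (1/2))) hintA hle
    simp only [Pi.sub_apply] at h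
    rw [integral_sub hintf (integrable_const _), integral_const, hfval, show μ.real Set.univ = 2 from hμuniv,
      smul_eq_mul] at h
    rw [hAdef]
    linarith
  have hB0 : 0 ≤ B := by
    have hle : ∀ᵐ x ∂μ, g x - 1/2 ≤ g x * Real.log (2 * g x) :=
      ae_of_all _ fun x => aux_lower ENNReal.toReal_nonneg
    have h := integral_mono_ae (hintg.sub (integrable_const (1/2))) hintB hle
    simp only [Pi.sub_apply] at h
    rw [integral_sub hintg (integrable_const _), integral_const, hgval, show μ.real Set.univ = 2 from hμuniv,
      smul_eq_mul] at h
    rw [hBdef]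
    linarith
  have hjs : jsDiv P Q = ENNReal.ofReal ((A + B)/2) := by
    show (2:ℝ≥0∞)⁻¹ * klDiv P ((2:ℝ≥0∞)⁻¹ • (P + Q))
        + (2:ℝ≥0∞)⁻¹ * klDiv Q ((2:ℝ≥0∞)⁻¹ • (P + Q)) = _
    rw [← hμdef, hklP, hklQ, ← mul_add, ← ENNReal.ofReal_add hA0 hB0,
      ENNReal.ofReal_div_of_pos (by norm_num : (0:ℝ) < 2), ENNReal.ofReal_ofNat,
      ENNReal.div_eq_inv_mul]
  have hH : sqHellinger P Q = (1/2) * ∫ x, (Real.sqrt (f x) - Real.sqrt (g x))^2 ∂μ := rfl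
  set H := ∫ x, (Real.sqrt (f x) - Real.sqrt (g x))^2 ∂μ with hHdef
  have hintH : Integrable (fun x => (Real.sqrt (f x) - Real.sqrt (g x))^2) μ := by
    refine Integrable.mono' (integrable_const 1)
      (((Real.continuous_sqrt.measurable.comp hmf).sub
        (Real.continuous_sqrt.measurable.comp hmg)).pow_const 2).aestronglyMeasurable ?_
    filter_upwards [hf1, hg1] with x hx1 hx2
    rw [Real.norm_eq_abs, abs_of_nonneg (sq_nonneg _)]
    have h1 : Real.sqrt (f x) ≤ 1 := Real.sqrt_le_one.mpr hx1
    have h2 : Real.sqrt (g x) ≤ 1 := Real.sqrt_le_one.mpr hx2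
    have h3 : 0 ≤ Real.sqrt (f x) := Real.sqrt_nonneg _
    have h4 : 0 ≤ Real.sqrt (g x) := Real.sqrt_nonneg _
    nlinarith
  have hpoint : ∀ᵐ x ∂μ,
      Real.log 2 * (Real.sqrt (f x) - Real.sqrt (g x))^2
          ≤ f x * Real.log (2 * f x) + g x * Real.log (2 * g x)
        ∧ f x * Real.log (2 * f x) + g x * Real.log (2 * g x)
          ≤ (Real.sqrt (f x) - Real.sqrt (g x))^2 := by
    filter_upwards [hsum] with x hx
    exact pointwise ENNReal.toReal_nonneg ENNReal.toReal_nonneg hx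
  have hup : A + B ≤ H := by
    have h1 := integral_mono_ae (hintA.add hintB) hintH
      (by filter_upwards [hpoint] with x hx using hx.2)
    simp only [Pi.add_apply] at h1
    rwa [integral_add hintA hintB] at h1
  have hlow : Real.log 2 * H ≤ A + B := by
    have h1 := integral_mono_ae (hintH.const_mul (Real.log 2)) (hintA.add hintB)
      (by filter_upwards [hpoint] with x hx using hx.1)
    simp only [Pi.add_apply] at h1
    rwa [integral_add hintA hintB, integral_const_mul] at h1
  constructor
  · rw [hjs]
    apply ENNReal.ofReal_le_ofReal
    rw [hH]
    linarith
  · rw [hjs]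
    apply ENNReal.ofReal_le_ofReal
    rw [hH]
    linarith
end
end

section
/- Let P and Q be probability measures on a product Ω₁×Ω₂×Ω₃ of standard Borel spaces, both of which are Markov chains X→Y→Z. Then the Total Variation distance satisfies TV(P,Q) ≤ TV(P_{XY},Q_{XY}) + TV(P_Y,Q_Y) + TV(P_{YZ},Q_{YZ}). -/
open MeasureTheory ProbabilityTheory Filter
open scoped ENNReal NNReal

noncomputable section

universe u

/-- A finite measure on a product of three standard Borel spaces is a Markov chain
`X → Y → Z` if the third coordinate is conditionally independent of the first coordinate
given the second coordinate. -/
def IsMarkovChain {Ω₁ Ω₂ Ω₃ : Type*} [MeasurableSpace Ω₁] [MeasurableSpace Ω₂]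
    [MeasurableSpace Ω₃] [StandardBorelSpace Ω₁] [StandardBorelSpace Ω₂]
    [StandardBorelSpace Ω₃] [Nonempty Ω₁] [Nonempty Ω₂] [Nonempty Ω₃]
    (P : Measure (Ω₁ × Ω₂ × Ω₃)) [IsFiniteMeasure P] : Prop :=
  CondIndepFun (MeasurableSpace.comap (fun ω : Ω₁ × Ω₂ × Ω₃ => ω.2.1) inferInstance)
    (measurable_snd.fst.comap_le) (fun ω => ω.2.2) (fun ω => ω.1) P

/-- The total variation distance `TV(P,Q) = sup_A |P(A) - Q(A)|`, the supremum running over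
measurable sets `A`. -/
def tvDist {Ω : Type*} [MeasurableSpace Ω] (P Q : Measure Ω) : ℝ :=
  ⨆ A : {A : Set Ω // MeasurableSet A}, |(P A.1).toReal - (Q A.1).toReal|

open MeasurableSpace Set

variable {α : Type*} [MeasurableSpace α]

lemma tv_bddAbove (μ ν : Measure α) [IsProbabilityMeasure μ] [IsProbabilityMeasure ν] :
    BddAbove (Set.range fun A : {A : Set α // MeasurableSet A} =>
      |(μ A.1).toReal - (ν A.1).toReal|) := by
  refine ⟨1, ?_⟩
  rintro x ⟨⟨A, hA⟩, rfl⟩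
  have h1 : (μ A).toReal ≤ 1 := by
    simpa using ENNReal.toReal_mono ENNReal.one_ne_top prob_le_one
  have h2 : (ν A).toReal ≤ 1 := by
    simpa using ENNReal.toReal_mono ENNReal.one_ne_top prob_le_one
  have h3 : 0 ≤ (μ A).toReal := ENNReal.toReal_nonneg
  have h4 : 0 ≤ (ν A).toReal := ENNReal.toReal_nonneg
  rw [abs_sub_le_iff]; constructor <;> linarith

lemma tvDist_comm (μ ν : Measure α) : tvDist μ ν = tvDist ν μ := by
  unfold tvDist
  congr 1; ext A; rw [abs_sub_comm]

lemma sub_le_tvDist (μ ν : Measure α) [IsProbabilityMeasure μ] [IsProbabilityMeasure ν]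
    {A : Set α} (hA : MeasurableSet A) :
    (μ A).toReal - (ν A).toReal ≤ tvDist μ ν :=
  le_trans (le_abs_self _) (le_ciSup (tv_bddAbove μ ν) ⟨A, hA⟩)

lemma tvDist_nonneg (μ ν : Measure α) [IsProbabilityMeasure μ] [IsProbabilityMeasure ν] :
    0 ≤ tvDist μ ν := by
  have := sub_le_tvDist μ ν MeasurableSet.empty
  simpa using this

lemma ennreal_aux {φ a b : ℝ≥0∞} (hφ : φ ≤ 1) (hab : b ≤ a) :
    a * φ + b ≤ b * φ + a := by
  calc a * φ + b = (b + (a - b)) * φ + b := by rw [add_tsub_cancel_of_le hab]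
    _ = b * φ + ((a - b) * φ + b) := by ring
    _ ≤ b * φ + ((a - b) * 1 + b) := by gcongr
    _ = b * φ + a := by rw [mul_one, tsub_add_cancel_of_le hab]

lemma lintegral_sub_le_tvDist (μ ν : Measure α) [IsProbabilityMeasure μ]
    [IsProbabilityMeasure ν] {φ : α → ℝ≥0∞} (hφ : Measurable φ) (hφ1 : ∀ a, φ a ≤ 1) :
    (∫⁻ a, φ a ∂μ).toReal - (∫⁻ a, φ a ∂ν).toReal ≤ tvDist μ ν := by
  set π := μ + ν with hπ
  have hμπ : μ ≪ π := Measure.absolutelyContinuous_of_le (Measure.le_add_right le_rfl)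
  have hνπ : ν ≪ π := Measure.absolutelyContinuous_of_le (Measure.le_add_left le_rfl)
  set g₁ := μ.rnDeriv π with hg₁
  set g₂ := ν.rnDeriv π with hg₂
  have hg₁m : Measurable g₁ := Measure.measurable_rnDeriv _ _
  have hg₂m : Measurable g₂ := Measure.measurable_rnDeriv _ _
  set T : Set α := {x | g₂ x ≤ g₁ x} with hT
  have hTm : MeasurableSet T := measurableSet_le hg₂m hg₁m
  have hμ_eq : π.withDensity g₁ = μ := Measure.withDensity_rnDeriv_eq _ _ hμπ
  have hν_eq : π.withDensity g₂ = ν := Measure.withDensity_rnDeriv_eq _ _ hνπ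
  have hIμ : ∫⁻ a, φ a ∂μ = ∫⁻ a, g₁ a * φ a ∂π := by
    rw [← hμ_eq, lintegral_withDensity_eq_lintegral_mul _ hg₁m hφ]; rfl
  have hIν : ∫⁻ a, φ a ∂ν = ∫⁻ a, g₂ a * φ a ∂π := by
    rw [← hν_eq, lintegral_withDensity_eq_lintegral_mul _ hg₂m hφ]; rfl
  have hμT : μ T = ∫⁻ a in T, g₁ a ∂π := by rw [← hμ_eq, withDensity_apply _ hTm]
  have hνT : ν T = ∫⁻ a in T, g₂ a ∂π := by rw [← hν_eq, withDensity_apply _ hTm]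
  have key : ∫⁻ a, φ a ∂μ + ν T ≤ ∫⁻ a, φ a ∂ν + μ T := by
    rw [hIμ, hIν, hμT, hνT, ← lintegral_add_compl (fun a => g₁ a * φ a) hTm,
      ← lintegral_add_compl (fun a => g₂ a * φ a) hTm]
    have h1 : ∫⁻ a in Tᶜ, g₁ a * φ a ∂π ≤ ∫⁻ a in Tᶜ, g₂ a * φ a ∂π := by
      refine setLIntegral_mono (hg₂m.mul hφ) fun x hx => ?_
      have : g₁ x ≤ g₂ x := le_of_lt (by simpa [hT] using hx)
      exact mul_le_mul_left this _
    have h2 : (∫⁻ a in T, g₁ a * φ a ∂π) + ∫⁻ a in T, g₂ a ∂π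
        ≤ (∫⁻ a in T, g₂ a * φ a ∂π) + ∫⁻ a in T, g₁ a ∂π := by
      rw [← lintegral_add_right _ hg₂m, ← lintegral_add_right _ hg₁m]
      refine setLIntegral_mono ((hg₂m.mul hφ).add hg₁m) fun x hx => ?_
      exact ennreal_aux (hφ1 x) (by simpa [hT] using hx)
    calc (∫⁻ a in T, g₁ a * φ a ∂π) + (∫⁻ a in Tᶜ, g₁ a * φ a ∂π) + ∫⁻ a in T, g₂ a ∂π
        = ((∫⁻ a in T, g₁ a * φ a ∂π) + ∫⁻ a in T, g₂ a ∂π) + ∫⁻ a in Tᶜ, g₁ a * φ a ∂π := by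
          ring
      _ ≤ ((∫⁻ a in T, g₂ a * φ a ∂π) + ∫⁻ a in T, g₁ a ∂π) + ∫⁻ a in Tᶜ, g₂ a * φ a ∂π := by
          gcongr
      _ = (∫⁻ a in T, g₂ a * φ a ∂π) + (∫⁻ a in Tᶜ, g₂ a * φ a ∂π) + ∫⁻ a in T, g₁ a ∂π := by
          ring
  have hfin : ∀ (ρ : Measure α) [IsProbabilityMeasure ρ], ∫⁻ a, φ a ∂ρ ≠ ⊤ := by
    intro ρ hρ
    have : ∫⁻ a, φ a ∂ρ ≤ 1 := by
      calc ∫⁻ a, φ a ∂ρ ≤ ∫⁻ _, 1 ∂ρ := lintegral_mono hφ1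
        _ = 1 := by simp
    exact (lt_of_le_of_lt this ENNReal.one_lt_top).ne
  have h5 : (∫⁻ a, φ a ∂μ).toReal - (∫⁻ a, φ a ∂ν).toReal ≤ (μ T).toReal - (ν T).toReal := by
    have := ENNReal.toReal_mono (by
      exact ENNReal.add_ne_top.2 ⟨hfin ν, measure_ne_top _ _⟩) key
    rw [ENNReal.toReal_add (hfin μ) (measure_ne_top _ _),
      ENNReal.toReal_add (hfin ν) (measure_ne_top _ _)] at this
    linarith
  exact h5.trans (sub_le_tvDist μ ν hTm)

lemma measure_sub_le_of_hahn {μ ν : Measure α} [IsFiniteMeasure μ] [IsFiniteMeasure ν]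
    {s S : Set α} (hs : MeasurableSet s) (hS : MeasurableSet S)
    (h1 : μ (s \ S) ≤ ν (s \ S)) (h2 : ν (S \ s) ≤ μ (S \ s)) :
    (μ s).toReal - (ν s).toReal ≤ (μ S).toReal - (ν S).toReal := by
  have key : μ s + ν S ≤ ν s + μ S := by
    have e1 := measure_inter_add_diff (μ := μ) s hS
    have e2 := measure_inter_add_diff (μ := ν) s hS
    have e3 := measure_inter_add_diff (μ := μ) S hs
    have e4 := measure_inter_add_diff (μ := ν) S hs
    have hc : S ∩ s = s ∩ S := Set.inter_comm _ _
    rw [hc] at e3 e4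
    calc μ s + ν S = (μ (s ∩ S) + ν (s ∩ S)) + (μ (s \ S) + ν (S \ s)) := by
          rw [← e1, ← e4]; ring
      _ ≤ (μ (s ∩ S) + ν (s ∩ S)) + (ν (s \ S) + μ (S \ s)) :=
          add_le_add_right (add_le_add h1 h2) _
      _ = ν s + μ S := by rw [← e2, ← e3]; ring
  have := ENNReal.toReal_mono
    (ENNReal.add_ne_top.2 ⟨measure_ne_top _ _, measure_ne_top _ _⟩) key
  rw [ENNReal.toReal_add (measure_ne_top _ _) (measure_ne_top _ _),
    ENNReal.toReal_add (measure_ne_top _ _) (measure_ne_top _ _)] at this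
  linarith

section kernelpart

variable {β γ : Type*} [MeasurableSpace β] [MeasurableSpace γ]
  [MeasurableSpace.CountableOrCountablyGenerated β γ]

open ProbabilityTheory.Kernel in
/-- For the measurable set `S := {p | rnDeriv κ₂ (κ₁+κ₂) p.1 p.2 ≤ rnDeriv κ₁ (κ₁+κ₂) p.1 p.2}`,
the difference `κ₁ y s - κ₂ y s` is dominated by its value at the section of `S`. -/
lemma kernel_sub_le_section {κ₁ κ₂ : Kernel β γ} [IsFiniteKernel κ₁] [IsFiniteKernel κ₂]
    (y : β) {s : Set γ} (hs : MeasurableSet s) :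
    (κ₁ y s).toReal - (κ₂ y s).toReal ≤
      (κ₁ y (Prod.mk y ⁻¹' {p : β × γ | rnDeriv κ₂ (κ₁ + κ₂) p.1 p.2
          ≤ rnDeriv κ₁ (κ₁ + κ₂) p.1 p.2})).toReal -
      (κ₂ y (Prod.mk y ⁻¹' {p : β × γ | rnDeriv κ₂ (κ₁ + κ₂) p.1 p.2
          ≤ rnDeriv κ₁ (κ₁ + κ₂) p.1 p.2})).toReal := by
  set η : Kernel β γ := κ₁ + κ₂ with hη
  set S : Set (β × γ) := {p : β × γ | rnDeriv κ₂ η p.1 p.2 ≤ rnDeriv κ₁ η p.1 p.2} with hSdef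
  have hSm : MeasurableSet S :=
    measurableSet_le (measurable_rnDeriv _ _) (measurable_rnDeriv _ _)
  have hSym : MeasurableSet (Prod.mk y ⁻¹' S) := measurable_prodMk_left hSm
  have hη_apply : η y = κ₁ y + κ₂ y := by simp [hη]
  have hac1 : κ₁ y ≪ η y := by
    rw [hη_apply]; exact Measure.absolutelyContinuous_of_le (Measure.le_add_right le_rfl)
  have hac2 : κ₂ y ≪ η y := by
    rw [hη_apply]; exact Measure.absolutelyContinuous_of_le (Measure.le_add_left le_rfl)
  have hwd1 : η.withDensity (rnDeriv κ₁ η) y = κ₁ y := withDensity_rnDeriv_eq hac1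
  have hwd2 : η.withDensity (rnDeriv κ₂ η) y = κ₂ y := withDensity_rnDeriv_eq hac2
  have happ1 : ∀ t : Set γ, MeasurableSet t → κ₁ y t = ∫⁻ z in t, rnDeriv κ₁ η y z ∂(η y) := by
    intro t ht
    rw [← hwd1, Kernel.withDensity_apply _ (measurable_rnDeriv _ _), withDensity_apply _ ht]
  have happ2 : ∀ t : Set γ, MeasurableSet t → κ₂ y t = ∫⁻ z in t, rnDeriv κ₂ η y z ∂(η y) := by
    intro t ht
    rw [← hwd2, Kernel.withDensity_apply _ (measurable_rnDeriv _ _), withDensity_apply _ ht]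
  refine measure_sub_le_of_hahn hs hSym ?_ ?_
  · rw [happ1 _ (hs.diff hSym), happ2 _ (hs.diff hSym)]
    refine setLIntegral_mono (measurable_rnDeriv_right _ _ _) fun z hz => ?_
    have : ¬ rnDeriv κ₂ η y z ≤ rnDeriv κ₁ η y z := hz.2
    exact (not_le.mp this).le
  · rw [happ1 _ (hSym.diff hs), happ2 _ (hSym.diff hs)]
    refine setLIntegral_mono (measurable_rnDeriv_right _ _ _) fun z hz => ?_
    exact hz.1

end kernelpart

section markov


variable {Ω₁ Ω₂ Ω₃ : Type u} [MeasurableSpace Ω₁] [MeasurableSpace Ω₂] [MeasurableSpace Ω₃]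
    [StandardBorelSpace Ω₁] [StandardBorelSpace Ω₂] [StandardBorelSpace Ω₃]
    [Nonempty Ω₁] [Nonempty Ω₂] [Nonempty Ω₃]

def mYa {Ω₁ Ω₂ Ω₃ : Type*} [MeasurableSpace Ω₂] : MeasurableSpace (Ω₁ × Ω₂ × Ω₃) :=
  MeasurableSpace.comap (fun ω : Ω₁ × Ω₂ × Ω₃ => ω.2.1) inferInstance

lemma isMarkovKernel_comap_snd (κ : Kernel Ω₂ Ω₃) [IsMarkovKernel κ] :
    IsMarkovKernel (κ.comap Prod.snd (measurable_snd : Measurable (Prod.snd : Ω₁ × Ω₂ → Ω₂))) := by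
  exact ⟨fun p => by rw [Kernel.comap_apply]; infer_instance⟩

attribute [local instance] isMarkovKernel_comap_snd

lemma markov_compProd (P : Measure (Ω₁ × Ω₂ × Ω₃)) [IsProbabilityMeasure P]
    (hP : IsMarkovChain P) :
    P.map (fun ω => ((ω.1, ω.2.1), ω.2.2)) =
      (P.map fun ω => (ω.1, ω.2.1)).compProd
        ((condDistrib (fun ω : Ω₁ × Ω₂ × Ω₃ => ω.2.2) (fun ω => ω.2.1) P).comap
          Prod.snd measurable_snd) := by
  classical
  have hX : Measurable fun ω : Ω₁ × Ω₂ × Ω₃ => ω.1 := measurable_fst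
  have hY : Measurable fun ω : Ω₁ × Ω₂ × Ω₃ => ω.2.1 := measurable_snd.fst
  have hZ : Measurable fun ω : Ω₁ × Ω₂ × Ω₃ => ω.2.2 := measurable_snd.snd
  have hXY : Measurable fun ω : Ω₁ × Ω₂ × Ω₃ => (ω.1, ω.2.1) := hX.prodMk hY
  have hf : Measurable fun ω : Ω₁ × Ω₂ × Ω₃ => ((ω.1, ω.2.1), ω.2.2) := hXY.prodMk hZ
  set κ := condDistrib (fun ω : Ω₁ × Ω₂ × Ω₃ => ω.2.2) (fun ω => ω.2.1) P with hκ
  haveI : IsProbabilityMeasure (P.map fun ω : Ω₁ × Ω₂ × Ω₃ => (ω.1, ω.2.1)) :=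
    Measure.isProbabilityMeasure_map hXY.aemeasurable
  have hm' : (mYa : MeasurableSpace (Ω₁ × Ω₂ × Ω₃)) ≤ _ := hY.comap_le
  refine ext_of_generate_finite
    (image2 (· ×ˢ ·) (image2 (· ×ˢ ·) {s : Set Ω₁ | MeasurableSet s}
      {s : Set Ω₂ | MeasurableSet s}) {s : Set Ω₃ | MeasurableSet s})
    (generateFrom_eq_prod generateFrom_prod generateFrom_measurableSet
      (isCountablySpanning_measurableSet.prod isCountablySpanning_measurableSet)
      isCountablySpanning_measurableSet).symm
    (isPiSystem_prod.prod isPiSystem_measurableSet) ?_ ?_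
  swap
  · rw [Measure.map_apply hf MeasurableSet.univ]
    simp
  rintro _ ⟨_, ⟨s₁, hs₁, s₂, hs₂, rfl⟩, s₃, hs₃, rfl⟩
  simp only [Set.mem_setOf_eq] at hs₁ hs₂ hs₃
  -- RHS computation
  have hRHS : (P.map fun ω : Ω₁ × Ω₂ × Ω₃ => (ω.1, ω.2.1)).compProd
        (κ.comap Prod.snd (measurable_snd : Measurable (Prod.snd : Ω₁ × Ω₂ → Ω₂))) ((s₁ ×ˢ s₂) ×ˢ s₃)
      = ∫⁻ ω in (fun ω : Ω₁ × Ω₂ × Ω₃ => (ω.1, ω.2.1)) ⁻¹' (s₁ ×ˢ s₂), κ ω.2.1 s₃ ∂P := by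
    rw [Measure.compProd_apply ((hs₁.prod hs₂).prod hs₃)]
    have : ∀ p : Ω₁ × Ω₂, (κ.comap Prod.snd (measurable_snd : Measurable (Prod.snd : Ω₁ × Ω₂ → Ω₂))) p (Prod.mk p ⁻¹' ((s₁ ×ˢ s₂) ×ˢ s₃))
        = (s₁ ×ˢ s₂).indicator (fun p : Ω₁ × Ω₂ => κ p.2 s₃) p := by
      intro p
      rw [Kernel.comap_apply, Set.mk_preimage_prod_right_eq_if, Set.indicator_apply]
      split_ifs <;> simp
    simp_rw [this]
    rw [lintegral_indicator (hs₁.prod hs₂)]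
    exact setLIntegral_map (hs₁.prod hs₂) ((κ.measurable_coe hs₃).comp measurable_snd) hXY
  rw [hRHS, Measure.map_apply hf ((hs₁.prod hs₂).prod hs₃)]
  -- names
  set E : Set (Ω₁ × Ω₂ × Ω₃) := (fun ω : Ω₁ × Ω₂ × Ω₃ => (ω.1, ω.2.1)) ⁻¹' (s₁ ×ˢ s₂) with hE
  have hEm : MeasurableSet E := hXY (hs₁.prod hs₂)
  have hpre : (fun ω : Ω₁ × Ω₂ × Ω₃ => ((ω.1, ω.2.1), ω.2.2)) ⁻¹' ((s₁ ×ˢ s₂) ×ˢ s₃)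
      = E ∩ (fun ω : Ω₁ × Ω₂ × Ω₃ => ω.2.2) ⁻¹' s₃ := rfl
  rw [hpre]
  set G : Set (Ω₁ × Ω₂ × Ω₃) := (fun ω : Ω₁ × Ω₂ × Ω₃ => ω.2.1) ⁻¹' s₂ with hG
  set F : Set (Ω₁ × Ω₂ × Ω₃) := (fun ω : Ω₁ × Ω₂ × Ω₃ => ω.1) ⁻¹' s₁ with hF
  set D : Set (Ω₁ × Ω₂ × Ω₃) := (fun ω : Ω₁ × Ω₂ × Ω₃ => ω.2.2) ⁻¹' s₃ ∩ F with hD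
  have hGm : MeasurableSet G := hY hs₂
  have hFm : MeasurableSet F := hX hs₁
  have hDm : MeasurableSet D := (hZ hs₃).inter hFm
  have hGm' : MeasurableSet[(mYa : MeasurableSpace (Ω₁ × Ω₂ × Ω₃))] G := ⟨s₂, hs₂, rfl⟩
  have hEGF : E = G ∩ F := by ext ω; exact and_comm
  -- the function g
  set g : Ω₁ × Ω₂ × Ω₃ → ℝ := fun ω => (κ ω.2.1 s₃).toReal with hgdef
  have hY' : @Measurable _ _ (mYa : MeasurableSpace (Ω₁ × Ω₂ × Ω₃)) _ (fun ω : Ω₁ × Ω₂ × Ω₃ => ω.2.1) := fun s hs => ⟨s, hs, rfl⟩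
  have hgm' : @Measurable _ _ (mYa : MeasurableSpace (Ω₁ × Ω₂ × Ω₃)) _ g := ((κ.measurable_coe hs₃).ennreal_toReal).comp hY'
  have hgsm : StronglyMeasurable[(mYa : MeasurableSpace (Ω₁ × Ω₂ × Ω₃))] g := hgm'.stronglyMeasurable
  have hgb : ∀ ω, ‖g ω‖ ≤ 1 := by
    intro ω
    rw [Real.norm_eq_abs, abs_of_nonneg ENNReal.toReal_nonneg]
    simpa using ENNReal.toReal_mono ENNReal.one_ne_top prob_le_one
  have hint1 : Integrable (F.indicator fun _ => (1 : ℝ)) P := (integrable_const 1).indicator hFm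
  have hintD : Integrable (D.indicator fun _ => (1 : ℝ)) P := (integrable_const 1).indicator hDm
  have hintg : Integrable (fun ω => g ω * F.indicator (fun _ => (1 : ℝ)) ω) P :=
    hint1.bdd_mul (hgsm.mono hm').aestronglyMeasurable (Eventually.of_forall hgb)
  -- finiteness of both sides
  have hRfin : ∫⁻ ω in E, κ ω.2.1 s₃ ∂P ≠ ⊤ := by
    have hle : ∫⁻ ω in E, κ ω.2.1 s₃ ∂P ≤ P E := by
      rw [← setLIntegral_one E]
      exact setLIntegral_mono measurable_const fun ω _ => prob_le_one
    exact (hle.trans_lt (measure_lt_top _ _)).ne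
  rw [← ENNReal.toReal_eq_toReal_iff' (measure_ne_top _ _) hRfin]
  -- the chain of real equalities
  have e1 : (∫⁻ ω in E, κ ω.2.1 s₃ ∂P).toReal = ∫ ω in E, g ω ∂P :=
    (integral_toReal ((κ.measurable_coe hs₃).comp hY).aemeasurable.restrict
      (Eventually.of_forall fun ω => measure_lt_top _ _)).symm
  have e2 : ∫ ω in E, g ω ∂P = ∫ ω in G, F.indicator g ω ∂P := by
    rw [setIntegral_indicator hFm, ← hEGF]
  have e3 : F.indicator g = fun ω => g ω * F.indicator (fun _ => (1 : ℝ)) ω := by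
    ext ω; by_cases h : ω ∈ F <;> simp [Set.indicator_apply, h]
  have e4 : ∫ ω in G, (fun ω => g ω * F.indicator (fun _ => (1 : ℝ)) ω) ω ∂P
      = ∫ ω in G, (P[fun ω => g ω * F.indicator (fun _ => (1 : ℝ)) ω|(mYa : MeasurableSpace (Ω₁ × Ω₂ × Ω₃))]) ω ∂P :=
    (setIntegral_condExp hm' hintg hGm').symm
  have e5 : (P[fun ω => g ω * F.indicator (fun _ => (1 : ℝ)) ω|(mYa : MeasurableSpace (Ω₁ × Ω₂ × Ω₃))])
      =ᵐ[P] fun ω => g ω * (P⟦F|(mYa : MeasurableSpace (Ω₁ × Ω₂ × Ω₃))⟧) ω := by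
    have := condExp_mul_of_stronglyMeasurable_left hgsm hintg hint1
    exact this
  have e6 : (fun ω => g ω * (P⟦F|(mYa : MeasurableSpace (Ω₁ × Ω₂ × Ω₃))⟧) ω)
      =ᵐ[P] fun ω => (P⟦(fun ω : Ω₁ × Ω₂ × Ω₃ => ω.2.2) ⁻¹' s₃|(mYa : MeasurableSpace (Ω₁ × Ω₂ × Ω₃))⟧) ω * (P⟦F|(mYa : MeasurableSpace (Ω₁ × Ω₂ × Ω₃))⟧) ω := by
    have h := condDistrib_ae_eq_condExp (μ := P) hY hZ hs₃
    filter_upwards [h] with ω hω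
    rw [hgdef]
    simp only
    exact congrArg (· * _) hω
  have e7 : (fun ω => (P⟦(fun ω : Ω₁ × Ω₂ × Ω₃ => ω.2.2) ⁻¹' s₃|(mYa : MeasurableSpace (Ω₁ × Ω₂ × Ω₃))⟧) ω * (P⟦F|(mYa : MeasurableSpace (Ω₁ × Ω₂ × Ω₃))⟧) ω)
      =ᵐ[P] P⟦D|(mYa : MeasurableSpace (Ω₁ × Ω₂ × Ω₃))⟧ := by
    have h := (condIndepFun_iff_condExp_inter_preimage_eq_mul (m' := (mYa : MeasurableSpace (Ω₁ × Ω₂ × Ω₃))) (hm' := hm')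
      (μ := P) hZ hX).mp hP s₃ s₁ hs₃ hs₁
    exact h.symm
  have e8 : ∫ ω in G, (P⟦D|(mYa : MeasurableSpace (Ω₁ × Ω₂ × Ω₃))⟧) ω ∂P = ∫ ω in G, D.indicator (fun _ => (1 : ℝ)) ω ∂P :=
    setIntegral_condExp hm' hintD hGm'
  have e9 : ∫ ω in G, D.indicator (fun _ => (1 : ℝ)) ω ∂P = (P (G ∩ D)).toReal := by
    rw [setIntegral_indicator hDm, setIntegral_const, smul_eq_mul, mul_one, measureReal_def]
  have hset : E ∩ (fun ω : Ω₁ × Ω₂ × Ω₃ => ω.2.2) ⁻¹' s₃ = G ∩ D := by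
    rw [hEGF, hD]; ext ω
    simp only [Set.mem_inter_iff, Set.mem_preimage]
    tauto
  rw [hset, e1, e2, e3, e4]
  rw [setIntegral_congr_ae hGm ((e5.trans (e6.trans e7)).mono fun ω hω _ => hω), e8, e9]

end markov

section main

variable {Ω₁ Ω₂ Ω₃ : Type u} [MeasurableSpace Ω₁] [MeasurableSpace Ω₂] [MeasurableSpace Ω₃]
    [StandardBorelSpace Ω₁] [StandardBorelSpace Ω₂] [StandardBorelSpace Ω₃]
    [Nonempty Ω₁] [Nonempty Ω₂] [Nonempty Ω₃]

lemma one_sided (P Q : Measure (Ω₁ × Ω₂ × Ω₃)) [IsProbabilityMeasure P] [IsProbabilityMeasure Q]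
    (hP : IsMarkovChain P) (hQ : IsMarkovChain Q) {A : Set (Ω₁ × Ω₂ × Ω₃)}
    (hA : MeasurableSet A) :
    (P A).toReal - (Q A).toReal ≤
      tvDist (P.map fun ω => (ω.1, ω.2.1)) (Q.map fun ω => (ω.1, ω.2.1))
      + tvDist (P.map fun ω => ω.2.1) (Q.map fun ω => ω.2.1)
      + tvDist (P.map fun ω => ω.2) (Q.map fun ω => ω.2) := by
  have hX : Measurable fun ω : Ω₁ × Ω₂ × Ω₃ => ω.1 := measurable_fst
  have hY : Measurable fun ω : Ω₁ × Ω₂ × Ω₃ => ω.2.1 := measurable_snd.fst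
  have hZ : Measurable fun ω : Ω₁ × Ω₂ × Ω₃ => ω.2.2 := measurable_snd.snd
  have hYZ : Measurable fun ω : Ω₁ × Ω₂ × Ω₃ => ω.2 := measurable_snd
  have hXY : Measurable fun ω : Ω₁ × Ω₂ × Ω₃ => (ω.1, ω.2.1) := hX.prodMk hY
  have hf : Measurable fun ω : Ω₁ × Ω₂ × Ω₃ => ((ω.1, ω.2.1), ω.2.2) := hXY.prodMk hZ
  have he : Measurable fun p : (Ω₁ × Ω₂) × Ω₃ => (p.1.1, p.1.2, p.2) :=
    (measurable_fst.fst).prodMk ((measurable_fst.snd).prodMk measurable_snd)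
  haveI h1 : IsProbabilityMeasure (P.map fun ω : Ω₁ × Ω₂ × Ω₃ => (ω.1, ω.2.1)) :=
    Measure.isProbabilityMeasure_map hXY.aemeasurable
  haveI h2 : IsProbabilityMeasure (Q.map fun ω : Ω₁ × Ω₂ × Ω₃ => (ω.1, ω.2.1)) :=
    Measure.isProbabilityMeasure_map hXY.aemeasurable
  haveI h3 : IsProbabilityMeasure (P.map fun ω : Ω₁ × Ω₂ × Ω₃ => ω.2.1) :=
    Measure.isProbabilityMeasure_map hY.aemeasurable
  haveI h4 : IsProbabilityMeasure (Q.map fun ω : Ω₁ × Ω₂ × Ω₃ => ω.2.1) :=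
    Measure.isProbabilityMeasure_map hY.aemeasurable
  haveI h5 : IsProbabilityMeasure (P.map fun ω : Ω₁ × Ω₂ × Ω₃ => ω.2) :=
    Measure.isProbabilityMeasure_map hYZ.aemeasurable
  haveI h6 : IsProbabilityMeasure (Q.map fun ω : Ω₁ × Ω₂ × Ω₃ => ω.2) :=
    Measure.isProbabilityMeasure_map hYZ.aemeasurable
  set κP := condDistrib (fun ω : Ω₁ × Ω₂ × Ω₃ => ω.2.2) (fun ω => ω.2.1) P with hκP
  set κQ := condDistrib (fun ω : Ω₁ × Ω₂ × Ω₃ => ω.2.2) (fun ω => ω.2.1) Q with hκQ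
  set A' : Set ((Ω₁ × Ω₂) × Ω₃) := (fun p : (Ω₁ × Ω₂) × Ω₃ => (p.1.1, p.1.2, p.2)) ⁻¹' A
    with hA'def
  have hA' : MeasurableSet A' := he hA
  set φP : Ω₁ × Ω₂ → ℝ≥0∞ := fun p => κP p.2 (Prod.mk p ⁻¹' A') with hφP
  set φQ : Ω₁ × Ω₂ → ℝ≥0∞ := fun p => κQ p.2 (Prod.mk p ⁻¹' A') with hφQ
  have hφPm : Measurable φP := by
    have := Kernel.measurable_kernel_prodMk_left
      (κ := κP.comap Prod.snd (measurable_snd : Measurable (Prod.snd : Ω₁ × Ω₂ → Ω₂))) hA'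
    simpa [Kernel.comap_apply] using this
  have hφQm : Measurable φQ := by
    have := Kernel.measurable_kernel_prodMk_left
      (κ := κQ.comap Prod.snd (measurable_snd : Measurable (Prod.snd : Ω₁ × Ω₂ → Ω₂))) hA'
    simpa [Kernel.comap_apply] using this
  have hφP1 : ∀ p, φP p ≤ 1 := fun p => prob_le_one
  have hφQ1 : ∀ p, φQ p ≤ 1 := fun p => prob_le_one
  -- disintegration identities
  have hPA : P A = ∫⁻ p, φP p ∂(P.map fun ω : Ω₁ × Ω₂ × Ω₃ => (ω.1, ω.2.1)) := by
    have h1 : P A = (P.map fun ω : Ω₁ × Ω₂ × Ω₃ => ((ω.1, ω.2.1), ω.2.2)) A' := by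
      rw [Measure.map_apply hf hA']; rfl
    rw [h1, markov_compProd P hP, Measure.compProd_apply hA']
    simp only [Kernel.comap_apply]; rfl
  have hQA : Q A = ∫⁻ p, φQ p ∂(Q.map fun ω : Ω₁ × Ω₂ × Ω₃ => (ω.1, ω.2.1)) := by
    have h1 : Q A = (Q.map fun ω : Ω₁ × Ω₂ × Ω₃ => ((ω.1, ω.2.1), ω.2.2)) A' := by
      rw [Measure.map_apply hf hA']; rfl
    rw [h1, markov_compProd Q hQ, Measure.compProd_apply hA']
    simp only [Kernel.comap_apply]; rfl
  -- the set S and function d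
  set S : Set (Ω₂ × Ω₃) := {p : Ω₂ × Ω₃ | Kernel.rnDeriv κQ (κP + κQ) p.1 p.2
      ≤ Kernel.rnDeriv κP (κP + κQ) p.1 p.2} with hSdef
  have hS : MeasurableSet S :=
    measurableSet_le (Kernel.measurable_rnDeriv _ _) (Kernel.measurable_rnDeriv _ _)
  set ψP : Ω₂ → ℝ≥0∞ := fun y => κP y (Prod.mk y ⁻¹' S) with hψP
  set ψQ : Ω₂ → ℝ≥0∞ := fun y => κQ y (Prod.mk y ⁻¹' S) with hψQ
  have hψPm : Measurable ψP := Kernel.measurable_kernel_prodMk_left hS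
  have hψQm : Measurable ψQ := Kernel.measurable_kernel_prodMk_left hS
  set d : Ω₂ → ℝ := fun y => (ψP y).toReal - (ψQ y).toReal with hd
  have hdb : ∀ y, ∀ s : Set Ω₃, MeasurableSet s →
      (κP y s).toReal - (κQ y s).toReal ≤ d y := by
    intro y s hs
    exact kernel_sub_le_section y hs
  -- abbreviations
  set PXY := P.map fun ω : Ω₁ × Ω₂ × Ω₃ => (ω.1, ω.2.1)
  set QXY := Q.map fun ω : Ω₁ × Ω₂ × Ω₃ => (ω.1, ω.2.1)
  set PY := P.map fun ω : Ω₁ × Ω₂ × Ω₃ => ω.2.1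
  set QY := Q.map fun ω : Ω₁ × Ω₂ × Ω₃ => ω.2.1
  set PYZ := P.map fun ω : Ω₁ × Ω₂ × Ω₃ => ω.2
  set QYZ := Q.map fun ω : Ω₁ × Ω₂ × Ω₃ => ω.2
  -- term 1
  have t1 : (∫⁻ p, φP p ∂PXY).toReal - (∫⁻ p, φP p ∂QXY).toReal ≤ tvDist PXY QXY :=
    lintegral_sub_le_tvDist _ _ hφPm hφP1
  -- integrability facts
  have hbd : ∀ {μ : Measure (Ω₁ × Ω₂)} {φ : Ω₁ × Ω₂ → ℝ≥0∞} [IsProbabilityMeasure μ],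
      Measurable φ → (∀ p, φ p ≤ 1) → Integrable (fun p => (φ p).toReal) μ := by
    intro μ φ _ hm hb
    refine ⟨hm.ennreal_toReal.aestronglyMeasurable, ?_⟩
    refine HasFiniteIntegral.of_bounded (C := 1) (Eventually.of_forall fun p => ?_)
    rw [Real.norm_eq_abs, abs_of_nonneg ENNReal.toReal_nonneg]
    simpa using ENNReal.toReal_mono ENNReal.one_ne_top (hb p)
  have hdm : Measurable d := (hψPm.ennreal_toReal).sub (hψQm.ennreal_toReal)
  have hdb1 : ∀ y, ‖d y‖ ≤ 1 := by
    intro y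
    have p1 : (ψP y).toReal ≤ 1 := by
      simpa using ENNReal.toReal_mono ENNReal.one_ne_top (prob_le_one (μ := κP y))
    have p2 : (ψQ y).toReal ≤ 1 := by
      simpa using ENNReal.toReal_mono ENNReal.one_ne_top (prob_le_one (μ := κQ y))
    have p3 : 0 ≤ (ψP y).toReal := ENNReal.toReal_nonneg
    have p4 : 0 ≤ (ψQ y).toReal := ENNReal.toReal_nonneg
    rw [Real.norm_eq_abs, abs_sub_le_iff]
    constructor <;> linarith
  have hintdQXY : Integrable (fun p : Ω₁ × Ω₂ => d p.2) QXY :=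
    ⟨(hdm.comp measurable_snd).aestronglyMeasurable,
      HasFiniteIntegral.of_bounded (C := 1) (Eventually.of_forall fun p => hdb1 p.2)⟩
  have hintdQY : Integrable d QY :=
    ⟨hdm.aestronglyMeasurable,
      HasFiniteIntegral.of_bounded (C := 1) (Eventually.of_forall fun y => hdb1 y)⟩
  have hintψP : Integrable (fun y => (ψP y).toReal) QY := by
    refine ⟨hψPm.ennreal_toReal.aestronglyMeasurable, ?_⟩
    refine HasFiniteIntegral.of_bounded (C := 1) (Eventually.of_forall fun y => ?_)
    rw [Real.norm_eq_abs, abs_of_nonneg ENNReal.toReal_nonneg]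
    simpa using ENNReal.toReal_mono ENNReal.one_ne_top (prob_le_one (μ := κP y))
  have hintψQ : Integrable (fun y => (ψQ y).toReal) QY := by
    refine ⟨hψQm.ennreal_toReal.aestronglyMeasurable, ?_⟩
    refine HasFiniteIntegral.of_bounded (C := 1) (Eventually.of_forall fun y => ?_)
    rw [Real.norm_eq_abs, abs_of_nonneg ENNReal.toReal_nonneg]
    simpa using ENNReal.toReal_mono ENNReal.one_ne_top (prob_le_one (μ := κQ y))
  -- term 2 : a2 - a3 ≤ b1 - b2
  have hQYmap : QY = QXY.map Prod.snd := by
    rw [Measure.map_map measurable_snd hXY]; rfl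
  have t2 : (∫⁻ p, φP p ∂QXY).toReal - (∫⁻ p, φQ p ∂QXY).toReal
      ≤ (∫⁻ y, ψP y ∂QY).toReal - (∫⁻ y, ψQ y ∂QY).toReal := by
    have i1 : (∫⁻ p, φP p ∂QXY).toReal = ∫ p, (φP p).toReal ∂QXY :=
      (integral_toReal hφPm.aemeasurable
        (Eventually.of_forall fun p => lt_of_le_of_lt (hφP1 p) ENNReal.one_lt_top)).symm
    have i2 : (∫⁻ p, φQ p ∂QXY).toReal = ∫ p, (φQ p).toReal ∂QXY :=
      (integral_toReal hφQm.aemeasurable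
        (Eventually.of_forall fun p => lt_of_le_of_lt (hφQ1 p) ENNReal.one_lt_top)).symm
    have i3 : (∫⁻ y, ψP y ∂QY).toReal = ∫ y, (ψP y).toReal ∂QY :=
      (integral_toReal hψPm.aemeasurable
        (Eventually.of_forall fun y => measure_lt_top _ _)).symm
    have i4 : (∫⁻ y, ψQ y ∂QY).toReal = ∫ y, (ψQ y).toReal ∂QY :=
      (integral_toReal hψQm.aemeasurable
        (Eventually.of_forall fun y => measure_lt_top _ _)).symm
    rw [i1, i2, i3, i4, ← integral_sub (hbd hφPm hφP1) (hbd hφQm hφQ1),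
      ← integral_sub hintψP hintψQ]
    have step : ∫ p, ((φP p).toReal - (φQ p).toReal) ∂QXY ≤ ∫ p : Ω₁ × Ω₂, d p.2 ∂QXY := by
      refine integral_mono ((hbd hφPm hφP1).sub (hbd hφQm hφQ1)) hintdQXY fun p => ?_
      exact hdb p.2 _ (measurable_prodMk_left hA')
    refine step.trans (le_of_eq ?_)
    rw [hQYmap, integral_map measurable_snd.aemeasurable hdm.aestronglyMeasurable]
  -- identification of compProds
  have hPcomp : PY.compProd κP = PYZ := by
    have hfst : PYZ.fst = PY := by
      rw [Measure.fst, Measure.map_map measurable_fst hYZ]; rfl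
    have hker : κP = PYZ.condKernel := by
      rw [hκP, condDistrib]
    calc PY.compProd κP = PYZ.fst.compProd PYZ.condKernel := by rw [hfst, ← hker]
      _ = PYZ := Measure.disintegrate _ _
  have hQcomp : QY.compProd κQ = QYZ := by
    have hfst : QYZ.fst = QY := by
      rw [Measure.fst, Measure.map_map measurable_fst hYZ]; rfl
    have hker : κQ = QYZ.condKernel := by
      rw [hκQ, condDistrib]
    calc QY.compProd κQ = QYZ.fst.compProd QYZ.condKernel := by rw [hfst, ← hker]
      _ = QYZ := Measure.disintegrate _ _
  have e_b3 : (∫⁻ y, ψP y ∂PY) = PYZ S := by rw [← hPcomp, Measure.compProd_apply hS]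
  have e_b2 : (∫⁻ y, ψQ y ∂QY) = QYZ S := by rw [← hQcomp, Measure.compProd_apply hS]
  have t3 : (∫⁻ y, ψP y ∂QY).toReal - (∫⁻ y, ψP y ∂PY).toReal ≤ tvDist PY QY :=
    calc (∫⁻ y, ψP y ∂QY).toReal - (∫⁻ y, ψP y ∂PY).toReal ≤ tvDist QY PY :=
          lintegral_sub_le_tvDist _ _ hψPm (fun _ => prob_le_one)
      _ = tvDist PY QY := (tvDist_comm QY PY)
  have t4 : (∫⁻ y, ψP y ∂PY).toReal - (∫⁻ y, ψQ y ∂QY).toReal ≤ tvDist PYZ QYZ := by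
    rw [e_b3, e_b2]
    exact sub_le_tvDist _ _ hS
  rw [hPA, hQA]
  linarith [t1, t2, t3, t4]

end main


/-- Subadditivity (with a middle marginal term) of the total variation distance on
three-variable Markov chains: `TV(P,Q) ≤ TV(P_XY,Q_XY) + TV(P_Y,Q_Y) + TV(P_YZ,Q_YZ)`. -/
theorem tvDist_subadditivity_markov_chain
    (Ω₁ Ω₂ Ω₃ : Type u) [MeasurableSpace Ω₁] [MeasurableSpace Ω₂] [MeasurableSpace Ω₃]
    [StandardBorelSpace Ω₁] [StandardBorelSpace Ω₂] [StandardBorelSpace Ω₃]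
    [Nonempty Ω₁] [Nonempty Ω₂] [Nonempty Ω₃]
    (P Q : Measure (Ω₁ × Ω₂ × Ω₃)) [IsProbabilityMeasure P] [IsProbabilityMeasure Q]
    (hP : IsMarkovChain P) (hQ : IsMarkovChain Q) :
    tvDist P Q ≤ tvDist (P.map fun ω => (ω.1, ω.2.1)) (Q.map fun ω => (ω.1, ω.2.1))
      + tvDist (P.map fun ω => ω.2.1) (Q.map fun ω => ω.2.1)
      + tvDist (P.map fun ω => ω.2) (Q.map fun ω => ω.2) := by
  refine ciSup_le fun A => ?_
  rw [abs_sub_le_iff]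
  constructor
  · exact one_sided P Q hP hQ A.2
  · rw [tvDist_comm (P.map fun ω => (ω.1, ω.2.1)), tvDist_comm (P.map fun ω => ω.2.1),
      tvDist_comm (P.map fun ω => ω.2)]
    exact one_sided Q P hQ hP A.2
end
end

section
/- Let f₁, f₂ : (0,∞) → ℝ be convex lower semi-continuous functions with f₁(1) = f₂(1) = 0 (extended by f_j(0) := lim_{t↓0} f_j(t)), and suppose the f₂-divergence satisfies subadditivity on Bayes-nets, i.e., for every pair of Bayes-nets P, Q with respect to any common DAG, D_{f₂}(P,Q) ≤ Σ_{i=1}^n D_{f₂}(P_{X_i∪X_{Π_i}}, Q_{X_i∪X_{Π_i}}). Let I ⊆ [0,∞) be an interval, and let 0 < A < B be constants such that for every t ∈ I one has f₂(t) ≥ 0 and A ≤ f₁(t)/f₂(t) ≤ B. Then for every pair of Bayes-nets P, Q on Ω₁×⋯×Ω_n with respect to a common DAG, with P having a density dP/dQ with respect to Q satisfying dP/dQ(x) ∈ I for all x ∈ Ω, it holds that (A/B)·D_{f₁}(P,Q) ≤ Σ_{i=1}^n D_{f₁}(P_{X_i∪X_{Π_i}}, Q_{X_i∪X_{Π_i}}).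 -/
open MeasureTheory ProbabilityTheory Filter
open scoped ENNReal NNReal

noncomputable section

universe u

/-- Projection of a point of a product space onto the coordinates in `S`. -/
def proj {n : ℕ} {Ω : Fin n → Type*} (S : Finset (Fin n)) (x : ∀ i, Ω i) (i : S) : Ω i := x i

lemma measurable_proj {n : ℕ} {Ω : Fin n → Type*} [∀ i, MeasurableSpace (Ω i)]
    (S : Finset (Fin n)) : Measurable (proj (Ω := Ω) S) :=
  measurable_pi_lambda _ fun _ => measurable_pi_apply _

/-- A finite measure `P` on a product of standard Borel spaces is a Bayes-net with respect to
the parent structure `par` (for the topological ordering `0 < 1 < ⋯ < n-1`) if, for every `i`,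
the `i`-th coordinate is conditionally independent of the tuple of previous coordinates given
the tuple of parent coordinates `par i`. -/
def IsBayesNet {n : ℕ} {Ω : Fin n → Type*} [∀ i, MeasurableSpace (Ω i)]
    [∀ i, StandardBorelSpace (Ω i)] [∀ i, Nonempty (Ω i)]
    (P : Measure (∀ i, Ω i)) [IsFiniteMeasure P] (par : Fin n → Finset (Fin n)) : Prop :=
  ∀ i : Fin n,
    CondIndepFun (MeasurableSpace.comap (proj (par i)) inferInstance)
      ((measurable_proj (par i)).comap_le) (fun x => x i) (proj (Finset.Iio i)) P

/-- The `f`-divergence `D_f(P,Q) = ∫ f(dP/dQ) dQ` (for `P` absolutely continuous w.r.t. `Q`). -/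
def fDiv (f : ℝ → ℝ) {Ω : Type*} [MeasurableSpace Ω] (P Q : Measure Ω) : ℝ :=
  ∫ x, f ((P.rnDeriv Q x).toReal) ∂Q

lemma contOn_Ici_aux {f : ℝ → ℝ} (hconv : ConvexOn ℝ (Set.Ioi 0) f)
    (h0 : Tendsto f (nhdsWithin 0 (Set.Ioi 0)) (nhds (f 0))) :
    ContinuousOn f (Set.Ici 0) := by
  intro t ht
  rcases eq_or_lt_of_le (Set.mem_Ici.mp ht : (0:ℝ) ≤ t) with rfl | htpos
  · have hset : Set.Ici (0:ℝ) = insert 0 (Set.Ioi 0) := by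
      ext x
      simp [Set.mem_Ici, Set.mem_Ioi, le_iff_lt_or_eq, or_comm, eq_comm]
    unfold ContinuousWithinAt
    rw [hset, nhdsWithin_insert, tendsto_sup]
    exact ⟨tendsto_pure_nhds f 0, h0⟩
  · have hco : ContinuousOn f (Set.Ioi 0) := hconv.continuousOn isOpen_Ioi
    exact ((hco t htpos).continuousAt (Ioi_mem_nhds htpos)).continuousWithinAt

lemma aesm_comp_aux {α : Type*} [MeasurableSpace α] {ν : Measure α} {f : ℝ → ℝ}
    (hf : ContinuousOn f (Set.Ici 0)) {ρ : α → ℝ} (hρ : Measurable ρ) (hρ0 : ∀ x, 0 ≤ ρ x) :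
    AEStronglyMeasurable (fun x => f (ρ x)) ν := by
  have h1 : Continuous ((Set.Ici (0:ℝ)).restrict f) := hf.restrict
  have h2 : Measurable (fun x => (⟨ρ x, hρ0 x⟩ : Set.Ici (0:ℝ))) := hρ.subtype_mk
  exact (h1.measurable.comp h2).aestronglyMeasurable

lemma integral_sandwich_aux {α : Type*} [MeasurableSpace α] (ν : Measure α)
    {g₁ g₂ : α → ℝ} (hg₁ : AEStronglyMeasurable g₁ ν) (hg₂ : AEStronglyMeasurable g₂ ν)
    {A B : ℝ} (hA : 0 < A)
    (h0 : ∀ᵐ x ∂ν, 0 ≤ g₂ x) (hl : ∀ᵐ x ∂ν, A * g₂ x ≤ g₁ x)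
    (hu : ∀ᵐ x ∂ν, g₁ x ≤ B * g₂ x) :
    A * ∫ x, g₂ x ∂ν ≤ ∫ x, g₁ x ∂ν ∧ ∫ x, g₁ x ∂ν ≤ B * ∫ x, g₂ x ∂ν := by
  by_cases hint : Integrable g₂ ν
  · have hint1 : Integrable g₁ ν := by
      refine Integrable.mono (hint.const_mul B) hg₁ ?_
      filter_upwards [h0, hl, hu] with x h0x hlx hux
      rw [Real.norm_eq_abs, Real.norm_eq_abs]
      have hg1nn : 0 ≤ g₁ x := le_trans (by positivity) hlx
      rw [abs_of_nonneg hg1nn]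
      exact hux.trans (le_abs_self _)
    constructor
    · rw [← integral_const_mul]
      exact integral_mono_ae (hint.const_mul A) hint1 hl
    · rw [← integral_const_mul]
      exact integral_mono_ae hint1 (hint.const_mul B) hu
  · have hint1 : ¬ Integrable g₁ ν := by
      intro h1
      apply hint
      refine Integrable.mono (h1.const_mul A⁻¹) hg₂ ?_
      filter_upwards [h0, hl] with x h0x hlx
      rw [Real.norm_eq_abs, Real.norm_eq_abs, abs_of_nonneg h0x]
      have h2 : g₂ x ≤ A⁻¹ * g₁ x := by
        rw [le_inv_mul_iff₀ hA]
        exact hlx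
      exact h2.trans (le_abs_self _)
    rw [integral_undef hint, integral_undef hint1]
    simp

lemma toReal_rnDeriv_mem_aux {α : Type*} [MeasurableSpace α] (μ ν : Measure α)
    [IsFiniteMeasure μ] [IsFiniteMeasure ν] (hac : μ ≪ ν)
    (I : Set ℝ) (hI0 : I ⊆ Set.Ici 0) (hIconn : I.OrdConnected) (hne : I.Nonempty)
    (hlow : ∀ a : ℝ, 0 ≤ a → (∀ y ∈ I, a ≤ y) → ∀ E : Set α, MeasurableSet E →
      ENNReal.ofReal a * ν E ≤ μ E)
    (hlow' : ∀ a : ℝ, 0 ≤ a → a ∉ I → (∀ y ∈ I, a ≤ y) → ∀ E : Set α, MeasurableSet E →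
      ν E ≠ 0 → ENNReal.ofReal a * ν E < μ E)
    (hupp : ∀ b : ℝ, 0 ≤ b → (∀ y ∈ I, y ≤ b) → ∀ E : Set α, MeasurableSet E →
      μ E ≤ ENNReal.ofReal b * ν E)
    (hupp' : ∀ b : ℝ, 0 ≤ b → b ∉ I → (∀ y ∈ I, y ≤ b) → ∀ E : Set α, MeasurableSet E →
      ν E ≠ 0 → μ E < ENNReal.ofReal b * ν E) :
    ∀ᵐ x ∂ν, (μ.rnDeriv ν x).toReal ∈ I := by
  set g := μ.rnDeriv ν with hg_def
  have hg : Measurable g := Measure.measurable_rnDeriv μ ν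
  have hfin : ∀ᵐ x ∂ν, g x < ∞ := Measure.rnDeriv_lt_top μ ν
  set a := sInf I with ha_def
  have hbddB : BddBelow I := ⟨0, fun y hy => hI0 hy⟩
  have ha0 : 0 ≤ a := le_csInf hne fun y hy => hI0 hy
  have haI : ∀ y ∈ I, a ≤ y := fun y hy => csInf_le hbddB hy
  have low1 : ∀ q : ℝ, 0 ≤ q → q < a → ν {x | g x ≤ ENNReal.ofReal q} = 0 := by
    intro q hq0 hqa
    set E := {x | g x ≤ ENNReal.ofReal q} with hE_def
    have hE : MeasurableSet E := hg measurableSet_Iic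
    have h1 : μ E ≤ ENNReal.ofReal q * ν E := by
      rw [← Measure.setLIntegral_rnDeriv hac E]
      calc ∫⁻ x in E, g x ∂ν ≤ ∫⁻ _ in E, ENNReal.ofReal q ∂ν :=
            setLIntegral_mono' hE fun x hx => hx
        _ = ENNReal.ofReal q * ν E := by rw [setLIntegral_const]
    have h2 := hlow a ha0 haI E hE
    by_contra hne0
    have hlt : ENNReal.ofReal q < ENNReal.ofReal a :=
      (ENNReal.ofReal_lt_ofReal_iff (lt_of_le_of_lt hq0 hqa)).mpr hqa
    have h3 : ENNReal.ofReal a * ν E ≤ ENNReal.ofReal q * ν E := h2.trans h1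
    rw [mul_comm (ENNReal.ofReal a), mul_comm (ENNReal.ofReal q)] at h3
    exact absurd ((ENNReal.mul_le_mul_iff_right hne0 (measure_ne_top ν E)).mp h3)
      (not_le.mpr hlt)
  have lowA : ∀ᵐ x ∂ν, a ≤ (g x).toReal := by
    rcases eq_or_lt_of_le ha0 with heq | hapos
    · filter_upwards with x
      rw [← heq]; exact ENNReal.toReal_nonneg
    · have hU : ν (⋃ q : ℚ, ⋃ (_ : 0 ≤ (q:ℝ) ∧ (q:ℝ) < a), {x | g x ≤ ENNReal.ofReal q}) = 0 :=
        measure_iUnion_null fun q => measure_iUnion_null fun hq => low1 q hq.1 hq.2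
      filter_upwards [measure_eq_zero_iff_ae_notMem.mp hU, hfin] with x hx hfx
      by_contra hlt
      push_neg at hlt
      obtain ⟨q, hq1, hq2⟩ := exists_rat_btwn hlt
      refine hx (Set.mem_iUnion.mpr ⟨q, Set.mem_iUnion.mpr
        ⟨⟨le_trans ENNReal.toReal_nonneg hq1.le, hq2⟩, ?_⟩⟩)
      show g x ≤ ENNReal.ofReal q
      rw [← ENNReal.ofReal_toReal hfx.ne]
      exact ENNReal.ofReal_le_ofReal hq1.le
  have lowB : a ∉ I → ∀ᵐ x ∂ν, ¬ (g x ≤ ENNReal.ofReal a) := by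
    intro haI'
    set E := {x | g x ≤ ENNReal.ofReal a} with hE_def
    have hE : MeasurableSet E := hg measurableSet_Iic
    have hν0 : ν E = 0 := by
      by_contra hne0
      have h1 : μ E ≤ ENNReal.ofReal a * ν E := by
        rw [← Measure.setLIntegral_rnDeriv hac E]
        calc ∫⁻ x in E, g x ∂ν ≤ ∫⁻ _ in E, ENNReal.ofReal a ∂ν :=
              setLIntegral_mono' hE fun x hx => hx
          _ = ENNReal.ofReal a * ν E := by rw [setLIntegral_const]
      exact absurd h1 (not_le.mpr (hlow' a ha0 haI' haI E hE hne0))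
    exact measure_eq_zero_iff_ae_notMem.mp hν0
  have hlowmem : ∀ᵐ x ∂ν, ∃ u ∈ I, u ≤ (g x).toReal := by
    by_cases haI' : a ∈ I
    · filter_upwards [lowA] with x hx
      exact ⟨a, haI', hx⟩
    · filter_upwards [lowA, lowB haI', hfin] with x hx1 hx2 hx3
      have hlt : a < (g x).toReal := by
        rcases lt_or_eq_of_le hx1 with h | h
        · exact h
        · exact absurd (by rw [← ENNReal.ofReal_toReal hx3.ne, ← h] : g x ≤ ENNReal.ofReal a)
            hx2
      obtain ⟨u, huI, hua⟩ := exists_lt_of_csInf_lt hne hlt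
      exact ⟨u, huI, hua.le⟩
  have huppmem : ∀ᵐ x ∂ν, ∃ v ∈ I, (g x).toReal ≤ v := by
    by_cases hbddA : BddAbove I
    · set b := sSup I with hb_def
      obtain ⟨y₀, hy₀⟩ := id hne
      have hb0 : 0 ≤ b := le_trans (hI0 hy₀) (le_csSup hbddA hy₀)
      have hbI : ∀ y ∈ I, y ≤ b := fun y hy => le_csSup hbddA hy
      have up1 : ∀ q : ℝ, b < q → ν {x | ENNReal.ofReal q ≤ g x} = 0 := by
        intro q hbq
        set E := {x | ENNReal.ofReal q ≤ g x} with hE_def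
        have hE : MeasurableSet E := hg measurableSet_Ici
        have h1 : ENNReal.ofReal q * ν E ≤ μ E := by
          rw [← Measure.setLIntegral_rnDeriv hac E]
          calc ENNReal.ofReal q * ν E = ∫⁻ _ in E, ENNReal.ofReal q ∂ν := by
                rw [setLIntegral_const]
            _ ≤ ∫⁻ x in E, g x ∂ν := setLIntegral_mono' hE fun x hx => hx
        have h2 := hupp b hb0 hbI E hE
        by_contra hne0
        have hlt : ENNReal.ofReal b < ENNReal.ofReal q :=
          (ENNReal.ofReal_lt_ofReal_iff (lt_of_le_of_lt hb0 hbq)).mpr hbq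
        have h3 : ENNReal.ofReal q * ν E ≤ ENNReal.ofReal b * ν E := h1.trans h2
        rw [mul_comm (ENNReal.ofReal q), mul_comm (ENNReal.ofReal b)] at h3
        exact absurd ((ENNReal.mul_le_mul_iff_right hne0 (measure_ne_top ν E)).mp h3)
          (not_le.mpr hlt)
      have upA : ∀ᵐ x ∂ν, (g x).toReal ≤ b := by
        have hU : ν (⋃ q : ℚ, ⋃ (_ : b < (q:ℝ)), {x | ENNReal.ofReal q ≤ g x}) = 0 :=
          measure_iUnion_null fun q => measure_iUnion_null fun hq => up1 q hq
        filter_upwards [measure_eq_zero_iff_ae_notMem.mp hU] with x hx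
        by_contra hlt
        push_neg at hlt
        obtain ⟨q, hq1, hq2⟩ := exists_rat_btwn hlt
        refine hx (Set.mem_iUnion.mpr ⟨q, Set.mem_iUnion.mpr ⟨hq1, ?_⟩⟩)
        show ENNReal.ofReal q ≤ g x
        exact le_trans (ENNReal.ofReal_le_ofReal hq2.le) ENNReal.ofReal_toReal_le
      by_cases hbI' : b ∈ I
      · filter_upwards [upA] with x hx
        exact ⟨b, hbI', hx⟩
      · have upB : ν {x | ENNReal.ofReal b ≤ g x} = 0 := by
          set E := {x | ENNReal.ofReal b ≤ g x} with hE_def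
          have hE : MeasurableSet E := hg measurableSet_Ici
          by_contra hne0
          have h1 : ENNReal.ofReal b * ν E ≤ μ E := by
            rw [← Measure.setLIntegral_rnDeriv hac E]
            calc ENNReal.ofReal b * ν E = ∫⁻ _ in E, ENNReal.ofReal b ∂ν := by
                  rw [setLIntegral_const]
              _ ≤ ∫⁻ x in E, g x ∂ν := setLIntegral_mono' hE fun x hx => hx
          exact absurd h1 (not_le.mpr (hupp' b hb0 hbI' hbI E hE hne0))
        filter_upwards [measure_eq_zero_iff_ae_notMem.mp upB] with x hx
        have hxlt : g x < ENNReal.ofReal b := not_le.mp hx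
        have hxlt' : (g x).toReal < b :=
          (ENNReal.lt_ofReal_iff_toReal_lt (lt_trans hxlt ENNReal.ofReal_lt_top).ne).mp hxlt
        obtain ⟨v, hvI, hv⟩ := exists_lt_of_lt_csSup hne hxlt'
        exact ⟨v, hvI, hv.le⟩
    · filter_upwards with x
      obtain ⟨v, hvI, hv⟩ := not_bddAbove_iff.mp hbddA ((g x).toReal)
      exact ⟨v, hvI, hv.le⟩
  filter_upwards [hlowmem, huppmem] with x hx1 hx2
  obtain ⟨u, huI, hu⟩ := hx1
  obtain ⟨v, hvI, hv⟩ := hx2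
  exact hIconn.out huI hvI ⟨hu, hv⟩

lemma fDiv_pair_bounds {α : Type*} [MeasurableSpace α] (μ ν : Measure α)
    (f₁ f₂ : ℝ → ℝ) (hf₁c : ContinuousOn f₁ (Set.Ici 0)) (hf₂c : ContinuousOn f₂ (Set.Ici 0))
    (I : Set ℝ) {A B : ℝ} (hA : 0 < A)
    (hbound : ∀ t ∈ I, 0 ≤ f₂ t ∧ A * f₂ t ≤ f₁ t ∧ f₁ t ≤ B * f₂ t)
    (hmem : ∀ᵐ x ∂ν, (μ.rnDeriv ν x).toReal ∈ I) :
    A * fDiv f₂ μ ν ≤ fDiv f₁ μ ν ∧ fDiv f₁ μ ν ≤ B * fDiv f₂ μ ν := by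
  have hρm : Measurable (fun x => (μ.rnDeriv ν x).toReal) :=
    (Measure.measurable_rnDeriv μ ν).ennreal_toReal
  have hρ0 : ∀ x, 0 ≤ (μ.rnDeriv ν x).toReal := fun x => ENNReal.toReal_nonneg
  exact integral_sandwich_aux ν (aesm_comp_aux hf₁c hρm hρ0) (aesm_comp_aux hf₂c hρm hρ0) hA
    (by filter_upwards [hmem] with x hx; exact (hbound _ hx).1)
    (by filter_upwards [hmem] with x hx; exact (hbound _ hx).2.1)
    (by filter_upwards [hmem] with x hx; exact (hbound _ hx).2.2)

/-- If the `f₂`-divergence is subadditive on Bayes-nets, `I ⊆ [0,∞)` is an interval on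
which `f₂ ≥ 0` and `A · f₂ ≤ f₁ ≤ B · f₂` (for constants `0 < A < B`; this is the meaning
of `A ≤ f₁/f₂ ≤ B` on `I`), then the `f₁`-divergence satisfies `(A/B)`-linear
subadditivity for all pairs of Bayes-nets whose density `dP/dQ` takes values in `I`. -/
theorem fDiv_linear_subadditivity_of_quotient_bound
    (f₁ f₂ : ℝ → ℝ)
    (hf₁convex : ConvexOn ℝ (Set.Ioi 0) f₁) (hf₂convex : ConvexOn ℝ (Set.Ioi 0) f₂)
    (hf₁lsc : LowerSemicontinuousOn f₁ (Set.Ici 0))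
    (hf₂lsc : LowerSemicontinuousOn f₂ (Set.Ici 0))
    (hf₁one : f₁ 1 = 0) (hf₂one : f₂ 1 = 0)
    (hf₁zero : Tendsto f₁ (nhdsWithin 0 (Set.Ioi 0)) (nhds (f₁ 0)))
    (hf₂zero : Tendsto f₂ (nhdsWithin 0 (Set.Ioi 0)) (nhds (f₂ 0)))
    (hsub : ∀ (n : ℕ) (Ω : Fin n → Type u) [∀ i, MeasurableSpace (Ω i)]
      [∀ i, StandardBorelSpace (Ω i)] [∀ i, Nonempty (Ω i)]
      (par : Fin n → Finset (Fin n)), (∀ i, par i ⊆ Finset.Iio i) →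
      ∀ (P Q : Measure (∀ i, Ω i)) [IsProbabilityMeasure P] [IsProbabilityMeasure Q],
      IsBayesNet P par → IsBayesNet Q par →
      fDiv f₂ P Q ≤ ∑ i : Fin n,
        fDiv f₂ (P.map (proj (insert i (par i)))) (Q.map (proj (insert i (par i)))))
    (I : Set ℝ) (hI : I ⊆ Set.Ici 0) (hIconn : I.OrdConnected)
    (A B : ℝ) (hA : 0 < A) (hAB : A < B)
    (hbound : ∀ t ∈ I, 0 ≤ f₂ t ∧ A * f₂ t ≤ f₁ t ∧ f₁ t ≤ B * f₂ t)
    {n : ℕ} (Ω : Fin n → Type u) [∀ i, MeasurableSpace (Ω i)]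
    [∀ i, StandardBorelSpace (Ω i)] [∀ i, Nonempty (Ω i)]
    (par : Fin n → Finset (Fin n)) (hpar : ∀ i, par i ⊆ Finset.Iio i)
    (P Q : Measure (∀ i, Ω i)) [IsProbabilityMeasure P] [IsProbabilityMeasure Q]
    (hP : IsBayesNet P par) (hQ : IsBayesNet Q par)
    (h : (∀ i, Ω i) → ℝ) (hmeas : Measurable h)
    (hdensity : P = Q.withDensity (fun x => ENNReal.ofReal (h x)))
    (hrange : ∀ x, h x ∈ I) :
    (A / B) * fDiv f₁ P Q ≤ ∑ i : Fin n,
      fDiv f₁ (P.map (proj (insert i (par i)))) (Q.map (proj (insert i (par i)))) := by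
  have hB : (0:ℝ) < B := hA.trans hAB
  have hPQ : P ≪ Q := by
    rw [hdensity]; exact withDensity_absolutelyContinuous _ _
  have hIne : I.Nonempty := ⟨h (Classical.arbitrary _), hrange _⟩
  have hf₁c : ContinuousOn f₁ (Set.Ici 0) := contOn_Ici_aux hf₁convex hf₁zero
  have hf₂c : ContinuousOn f₂ (Set.Ici 0) := contOn_Ici_aux hf₂convex hf₂zero
  -- density of `P` w.r.t. `Q` takes values in `I` a.e.
  have hρPQ : ∀ᵐ x ∂Q, (P.rnDeriv Q x).toReal ∈ I := by
    have hrd : P.rnDeriv Q =ᵐ[Q] fun x => ENNReal.ofReal (h x) := by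
      rw [hdensity]
      exact Measure.rnDeriv_withDensity Q (hmeas.ennreal_ofReal)
    filter_upwards [hrd] with x hx
    rw [hx, ENNReal.toReal_ofReal (hI (hrange x))]
    exact hrange x
  have h1 := fDiv_pair_bounds P Q f₁ f₂ hf₁c hf₂c I hA hbound hρPQ
  have hsum := hsub n Ω par hpar P Q hP hQ
  -- termwise bound for marginals
  have hterm : ∀ i : Fin n,
      A * fDiv f₂ (P.map (proj (insert i (par i)))) (Q.map (proj (insert i (par i)))) ≤
        fDiv f₁ (P.map (proj (insert i (par i)))) (Q.map (proj (insert i (par i)))) := by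
    intro i
    set S := insert i (par i) with hS_def
    have hpr : Measurable (proj (Ω := Ω) S) := measurable_proj S
    haveI : IsProbabilityMeasure (P.map (proj (Ω := Ω) S)) :=
      Measure.isProbabilityMeasure_map hpr.aemeasurable
    haveI : IsProbabilityMeasure (Q.map (proj (Ω := Ω) S)) :=
      Measure.isProbabilityMeasure_map hpr.aemeasurable
    have hacS : P.map (proj (Ω := Ω) S) ≪ Q.map (proj (Ω := Ω) S) := hPQ.map hpr
    have hμE : ∀ E : Set ((j : S) → Ω j), MeasurableSet E →
        (P.map (proj (Ω := Ω) S)) E = ∫⁻ x in (proj (Ω := Ω) S) ⁻¹' E, ENNReal.ofReal (h x) ∂Q := by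
      intro E hE
      rw [Measure.map_apply hpr hE, hdensity, withDensity_apply _ (hpr hE)]
    have hνE : ∀ E : Set ((j : S) → Ω j), MeasurableSet E →
        (Q.map (proj (Ω := Ω) S)) E = Q ((proj (Ω := Ω) S) ⁻¹' E) :=
      fun E hE => Measure.map_apply hpr hE
    have hmem_i : ∀ᵐ y ∂(Q.map (proj (Ω := Ω) S)),
        ((P.map (proj (Ω := Ω) S)).rnDeriv (Q.map (proj (Ω := Ω) S)) y).toReal ∈ I := by
      refine toReal_rnDeriv_mem_aux _ _ hacS I hI hIconn hIne ?_ ?_ ?_ ?_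
      · intro a ha0 haI E hE
        rw [hμE E hE, hνE E hE]
        calc ENNReal.ofReal a * Q ((proj (Ω := Ω) S) ⁻¹' E)
            = ∫⁻ _ in (proj (Ω := Ω) S) ⁻¹' E, ENNReal.ofReal a ∂Q := by rw [setLIntegral_const]
          _ ≤ ∫⁻ x in (proj (Ω := Ω) S) ⁻¹' E, ENNReal.ofReal (h x) ∂Q :=
            setLIntegral_mono' (hpr hE) fun x _ =>
              ENNReal.ofReal_le_ofReal (haI _ (hrange x))
      · intro a ha0 haI' haI E hE hνE0
        rw [hμE E hE, hνE E hE]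
        have hQF : Q ((proj (Ω := Ω) S) ⁻¹' E) ≠ 0 := by rwa [hνE E hE] at hνE0
        have hstrict := setLIntegral_strict_mono (μ := Q)
          (f := fun _ => ENNReal.ofReal a) (g := fun x => ENNReal.ofReal (h x))
          (hpr hE) hQF hmeas.ennreal_ofReal
          (by rw [setLIntegral_const]
              exact ENNReal.mul_ne_top ENNReal.ofReal_ne_top (measure_ne_top Q _))
          (ae_of_all _ fun x _ => by
            have hax : a < h x := lt_of_le_of_ne (haI _ (hrange x))
              (fun he => haI' (he ▸ hrange x))
            exact (ENNReal.ofReal_lt_ofReal_iff (lt_of_le_of_lt ha0 hax)).mpr hax)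
        calc ENNReal.ofReal a * Q ((proj (Ω := Ω) S) ⁻¹' E)
            = ∫⁻ _ in (proj (Ω := Ω) S) ⁻¹' E, ENNReal.ofReal a ∂Q := by rw [setLIntegral_const]
          _ < ∫⁻ x in (proj (Ω := Ω) S) ⁻¹' E, ENNReal.ofReal (h x) ∂Q := hstrict
      · intro b hb0 hbI E hE
        rw [hμE E hE, hνE E hE]
        calc ∫⁻ x in (proj (Ω := Ω) S) ⁻¹' E, ENNReal.ofReal (h x) ∂Q
            ≤ ∫⁻ _ in (proj (Ω := Ω) S) ⁻¹' E, ENNReal.ofReal b ∂Q :=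
            setLIntegral_mono' (hpr hE) fun x _ =>
              ENNReal.ofReal_le_ofReal (hbI _ (hrange x))
          _ = ENNReal.ofReal b * Q ((proj (Ω := Ω) S) ⁻¹' E) := by rw [setLIntegral_const]
      · intro b hb0 hbI' hbI E hE hνE0
        rw [hμE E hE, hνE E hE]
        have hQF : Q ((proj (Ω := Ω) S) ⁻¹' E) ≠ 0 := by rwa [hνE E hE] at hνE0
        have hub : ∫⁻ x in (proj (Ω := Ω) S) ⁻¹' E, ENNReal.ofReal (h x) ∂Q
            ≤ ENNReal.ofReal b * Q ((proj (Ω := Ω) S) ⁻¹' E) := by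
          calc ∫⁻ x in (proj (Ω := Ω) S) ⁻¹' E, ENNReal.ofReal (h x) ∂Q
              ≤ ∫⁻ _ in (proj (Ω := Ω) S) ⁻¹' E, ENNReal.ofReal b ∂Q :=
              setLIntegral_mono' (hpr hE) fun x _ =>
                ENNReal.ofReal_le_ofReal (hbI _ (hrange x))
            _ = ENNReal.ofReal b * Q ((proj (Ω := Ω) S) ⁻¹' E) := by rw [setLIntegral_const]
        have hfi : ∫⁻ x in (proj (Ω := Ω) S) ⁻¹' E, ENNReal.ofReal (h x) ∂Q ≠ ∞ :=
          ne_top_of_le_ne_top (ENNReal.mul_ne_top ENNReal.ofReal_ne_top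
            (measure_ne_top Q _)) hub
        have hstrict := setLIntegral_strict_mono (μ := Q)
          (f := fun x => ENNReal.ofReal (h x)) (g := fun _ => ENNReal.ofReal b)
          (hpr hE) hQF measurable_const hfi
          (ae_of_all _ fun x _ => by
            have hbx : h x < b := lt_of_le_of_ne (hbI _ (hrange x))
              (fun he => hbI' (he ▸ hrange x))
            exact (ENNReal.ofReal_lt_ofReal_iff (lt_of_le_of_lt (hI (hrange x)) hbx)).mpr hbx)
        calc ∫⁻ x in (proj (Ω := Ω) S) ⁻¹' E, ENNReal.ofReal (h x) ∂Q
            < ∫⁻ _ in (proj (Ω := Ω) S) ⁻¹' E, ENNReal.ofReal b ∂Q := hstrict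
          _ = ENNReal.ofReal b * Q ((proj (Ω := Ω) S) ⁻¹' E) := by rw [setLIntegral_const]
    exact (fDiv_pair_bounds _ _ f₁ f₂ hf₁c hf₂c I hA hbound hmem_i).1
  calc (A / B) * fDiv f₁ P Q ≤ (A / B) * (B * fDiv f₂ P Q) := by
        apply mul_le_mul_of_nonneg_left h1.2 (by positivity)
    _ = A * fDiv f₂ P Q := by rw [← mul_assoc, div_mul_cancel₀ _ hB.ne']
    _ ≤ A * ∑ i : Fin n,
        fDiv f₂ (P.map (proj (insert i (par i)))) (Q.map (proj (insert i (par i)))) :=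
        mul_le_mul_of_nonneg_left hsum hA.le
    _ = ∑ i : Fin n, A *
        fDiv f₂ (P.map (proj (insert i (par i)))) (Q.map (proj (insert i (par i)))) :=
        Finset.mul_sum _ _ _
    _ ≤ ∑ i : Fin n,
        fDiv f₁ (P.map (proj (insert i (par i)))) (Q.map (proj (insert i (par i)))) :=
        Finset.sum_le_sum fun i _ => hterm i
end
end
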